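/- arXiv:1707.08461 — 5 statements merged into one kernel-verified Lean document; each statement's English description precedes it below -/
import Mathlib

section
/- Let A be an n×n complex random matrix with arbitrary distribution, let M ≥ 1 and let ε, p₀, δ ∈ (0,1/2) with εn a positive integer. Assume that for every number λ₀ ∈ ℂ with |λ₀| ≤ M√n and every set I ⊆ {1,…,n} with |I| = εn, one has P( s_min((A − λ₀ I_n)_{I^c}) ≤ 8δM√n and ‖A‖ ≤ M√n ) ≤ p₀. Then P( Loc(A, ε, δ) and ‖A‖ ≤ M√n ) ≤ 5 δ^{−2} (e/ε)^{εn} p₀, where Loc(A, ε, δ) is the event that there exist a unit eigenvector v ∈ ℂⁿ of A and a set I ⊆ {1,…,n} with |I| = εn such that ‖v_I‖₂ < δ. -/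
set_option maxHeartbeats 1000000


open MeasureTheory ProbabilityTheory Matrix

/-- The Euclidean norm of a finitely supported complex vector. -/
noncomputable def eNormC {ι : Type*} [Fintype ι] (v : ι → ℂ) : ℝ :=
  Real.sqrt (∑ i, ‖v i‖ ^ 2)

/-- The Euclidean norm of the restriction of `v` to the coordinates in `I`. -/
noncomputable def eNormSub {n : ℕ} (v : Fin n → ℂ) (I : Finset (Fin n)) : ℝ :=
  Real.sqrt (∑ i ∈ I, ‖v i‖ ^ 2)

/-- The smallest singular value of a rectangular matrix: the infimum of `‖Bx‖₂`
over unit vectors `x`. -/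
noncomputable def sMin {N : ℕ} {m : Type*} [Fintype m] (B : Matrix (Fin N) m ℂ) : ℝ :=
  sInf {r | ∃ x : m → ℂ, eNormC x = 1 ∧ r = eNormC (B *ᵥ x)}

/-- The submatrix of an `n × n` matrix `B` consisting of the columns outside `I`. -/
def colsOutside {n : ℕ} (B : Matrix (Fin n) (Fin n) ℂ) (I : Finset (Fin n)) :
    Matrix (Fin n) {j : Fin n // j ∉ I} ℂ :=
  B.submatrix id fun j : {j : Fin n // j ∉ I} => (j : Fin n)

/- ----------------- auxiliary lemmas ----------------- -/

lemma eNormC_eq_norm {ι : Type*} [Fintype ι] (v : ι → ℂ) :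
    eNormC v = ‖(WithLp.toLp 2 v : EuclideanSpace ℂ ι)‖ := by
  rw [EuclideanSpace.norm_eq]; rfl

lemma eNormC_nonneg {ι : Type*} [Fintype ι] (v : ι → ℂ) : 0 ≤ eNormC v :=
  Real.sqrt_nonneg _

lemma eNormC_smul {ι : Type*} [Fintype ι] (c : ℂ) (v : ι → ℂ) :
    eNormC (c • v) = ‖c‖ * eNormC v := by
  rw [eNormC_eq_norm, eNormC_eq_norm]
  exact norm_smul c (WithLp.toLp 2 v : EuclideanSpace ℂ ι)

lemma eNormC_sub_le {ι : Type*} [Fintype ι] (f g : ι → ℂ) :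
    eNormC (f - g) ≤ eNormC f + eNormC g := by
  rw [eNormC_eq_norm, eNormC_eq_norm, eNormC_eq_norm]
  exact norm_sub_le (WithLp.toLp 2 f : EuclideanSpace ℂ ι) (WithLp.toLp 2 g : EuclideanSpace ℂ ι)

lemma sMin_le {N : ℕ} {m : Type*} [Fintype m] (B : Matrix (Fin N) m ℂ) (x : m → ℂ)
    (hx : eNormC x = 1) : sMin B ≤ eNormC (B *ᵥ x) := by
  apply csInf_le
  · refine ⟨0, fun r hr => ?_⟩
    obtain ⟨y, _, rfl⟩ := hr
    exact eNormC_nonneg _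
  · exact ⟨x, hx, rfl⟩

lemma cols_decomp {n : ℕ} (B : Matrix (Fin n) (Fin n) ℂ) (I : Finset (Fin n)) (v : Fin n → ℂ) :
    colsOutside B I *ᵥ (fun j : {j : Fin n // j ∉ I} => v j)
      = B *ᵥ v - B *ᵥ (fun j => if j ∈ I then v j else 0) := by
  classical
  funext i
  simp only [colsOutside, Matrix.mulVec, Matrix.submatrix_apply, id_eq, Pi.sub_apply, dotProduct]
  rw [← Finset.sum_sub_distrib]
  have h2 : ∀ j : Fin n, B i j * v j - B i j * (if j ∈ I then v j else 0)
      = (if j ∈ Iᶜ then B i j * v j else 0) := by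
    intro j
    by_cases hj : j ∈ I <;> simp [hj]
  simp only [h2]
  rw [Finset.sum_ite_mem, Finset.univ_inter]
  rw [Finset.sum_subtype Iᶜ (p := fun j => j ∉ I) (by simp) (fun j => B i j * v j)]

lemma eNormC_subtype_sq {n : ℕ} (v : Fin n → ℂ) (I : Finset (Fin n)) :
    eNormC (fun j : {j : Fin n // j ∉ I} => v j) ^ 2
      = (∑ i, ‖v i‖ ^ 2) - eNormSub v I ^ 2 := by
  classical
  unfold eNormC eNormSub
  rw [Real.sq_sqrt (by positivity), Real.sq_sqrt (by positivity)]
  rw [← Finset.sum_subtype Iᶜ (p := fun j => j ∉ I) (by simp) (fun j => ‖v j‖ ^ 2)]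
  have h := Finset.sum_add_sum_compl I (fun j : Fin n => ‖v j‖ ^ 2)
  linarith

lemma eNormC_maskI {n : ℕ} (v : Fin n → ℂ) (I : Finset (Fin n)) :
    eNormC (fun j => if j ∈ I then v j else 0) = eNormSub v I := by
  classical
  unfold eNormC eNormSub
  congr 1
  have h : ∀ j : Fin n, ‖if j ∈ I then v j else 0‖ ^ 2
      = (if j ∈ I then ‖v j‖ ^ 2 else 0) := by
    intro j; by_cases hj : j ∈ I <;> simp [hj]
  simp only [h]
  rw [Finset.sum_ite_mem, Finset.univ_inter]

/-- projection onto the disc of radius `R`. -/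
noncomputable def projD (R : ℝ) (z : ℂ) : ℂ :=
  if ‖z‖ ≤ R then z else ((R / ‖z‖ : ℝ) : ℂ) * z

lemma abs_projD_le {R : ℝ} (hR : 0 ≤ R) (z : ℂ) : ‖projD R z‖ ≤ R := by
  unfold projD
  split
  · next h => exact h
  · next h =>
    push_neg at h
    have hz : (0:ℝ) < ‖z‖ := lt_of_le_of_lt hR h
    rw [norm_mul, Complex.norm_real, Real.norm_eq_abs, abs_of_nonneg (by positivity)]
    rw [div_mul_cancel₀ _ hz.ne']

lemma abs_sub_projD {R : ℝ} (hR : 0 ≤ R) (z lam : ℂ) (hlam : ‖lam‖ ≤ R) :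
    ‖lam - projD R z‖ ≤ 2 * ‖lam - z‖ := by
  unfold projD
  split
  · next h => linarith [norm_nonneg (lam - z)]
  · next h =>
    push_neg at h
    have hz : (0:ℝ) < ‖z‖ := lt_of_le_of_lt hR h
    have hd1 : R / ‖z‖ ≤ 1 := by
      rw [div_le_one hz]; exact h.le
    have key : ‖z - ((R / ‖z‖ : ℝ) : ℂ) * z‖ = ‖z‖ - R := by
      have h1 : z - ((R / ‖z‖ : ℝ) : ℂ) * z
          = ((1 - R / ‖z‖ : ℝ) : ℂ) * z := by
        push_cast; ring
      rw [h1, norm_mul, Complex.norm_real, Real.norm_eq_abs, abs_of_nonneg (by linarith)]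
      rw [sub_mul, one_mul, div_mul_cancel₀ _ hz.ne']
    have h2 : ‖z‖ - R ≤ ‖lam - z‖ := by
      have h3 := norm_sub_norm_le z lam
      rw [norm_sub_rev] at h3
      linarith
    calc ‖lam - ((R / ‖z‖ : ℝ) : ℂ) * z‖
        ≤ ‖lam - z‖ + ‖z - ((R / ‖z‖ : ℝ) : ℂ) * z‖ :=
          norm_sub_le_norm_sub_add_norm_sub lam z _
      _ ≤ ‖lam - z‖ + ‖lam - z‖ := by rw [key]; linarith
      _ = 2 * ‖lam - z‖ := by ring

lemma axis_cover (sv : ℝ) (hs : 0 < sv) (m : ℕ) (x : ℝ) (hx : |x| ≤ ((m : ℝ) + 1 / 2) * sv) :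
    ∃ a : ℤ, |a| ≤ (m : ℤ) ∧ |x - (a : ℝ) * sv| ≤ sv / 2 := by
  have key : ∀ a : ℤ, |x / sv - (a : ℝ)| ≤ 1 / 2 → |x - (a : ℝ) * sv| ≤ sv / 2 := by
    intro a ha
    have h1 : x - (a : ℝ) * sv = (x / sv - (a : ℝ)) * sv := by
      field_simp
    rw [h1, abs_mul, abs_of_pos hs]
    nlinarith [abs_nonneg (x / sv - (a : ℝ))]
  set y := x / sv with hy
  have hyb : |y| ≤ (m : ℝ) + 1 / 2 := by
    rw [hy, abs_div, abs_of_pos hs, div_le_iff₀ hs]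
    exact hx
  have hr := abs_sub_round y
  obtain ⟨hyb1, hyb2⟩ := abs_le.mp hyb
  obtain ⟨hr1, hr2⟩ := abs_le.mp hr
  rcases le_or_gt |round y| (m : ℤ) with h | h
  · exact ⟨round y, h, key _ hr⟩
  · rcases lt_or_ge (round y) 0 with hneg | hpos
    · refine ⟨-(m : ℤ), by simp, key _ ?_⟩
      have h5 : round y ≤ -(m : ℤ) - 1 := by
        have h6 : (m : ℤ) < -round y := by rwa [abs_of_neg hneg] at h
        omega
      have hc' : (round y : ℝ) ≤ -(m : ℝ) - 1 := by exact_mod_cast h5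
      rw [abs_le]
      push_cast
      constructor <;> linarith
    · refine ⟨(m : ℤ), by simp, key _ ?_⟩
      have h5 : (m : ℤ) + 1 ≤ round y := by
        have h6 : (m : ℤ) < round y := by rwa [abs_of_nonneg hpos] at h
        omega
      have hc' : (m : ℝ) + 1 ≤ (round y : ℝ) := by exact_mod_cast h5
      rw [abs_le]
      push_cast
      constructor <;> linarith

lemma grid_cover (sv : ℝ) (hs : 0 < sv) (m : ℕ) (R : ℝ) (hRs : R ≤ ((m : ℝ) + 1 / 2) * sv)
    (lam : ℂ) (hlam : ‖lam‖ ≤ R) :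
    ∃ a b : ℤ, |a| ≤ (m : ℤ) ∧ |b| ≤ (m : ℤ) ∧
      ‖lam - (((a : ℝ) * sv : ℝ) + ((b : ℝ) * sv : ℝ) * Complex.I)‖
        ≤ (71 / 100) * sv := by
  have hre : |lam.re| ≤ ((m : ℝ) + 1 / 2) * sv := le_trans (Complex.abs_re_le_norm lam)
    (le_trans hlam hRs)
  have him : |lam.im| ≤ ((m : ℝ) + 1 / 2) * sv := le_trans (Complex.abs_im_le_norm lam)
    (le_trans hlam hRs)
  obtain ⟨a, ha, hax⟩ := axis_cover sv hs m lam.re hre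
  obtain ⟨b, hb, hbx⟩ := axis_cover sv hs m lam.im him
  refine ⟨a, b, ha, hb, ?_⟩
  have h1 : (lam - (((a : ℝ) * sv : ℝ) + ((b : ℝ) * sv : ℝ) * Complex.I)).re
      = lam.re - (a : ℝ) * sv := by simp
  have h2 : (lam - (((a : ℝ) * sv : ℝ) + ((b : ℝ) * sv : ℝ) * Complex.I)).im
      = lam.im - (b : ℝ) * sv := by simp
  rw [Complex.norm_def, Complex.normSq_apply, h1, h2]
  obtain ⟨ha1, ha2⟩ := abs_le.mp hax
  obtain ⟨hb1, hb2⟩ := abs_le.mp hbx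
  have hsum : (lam.re - (a : ℝ) * sv) * (lam.re - (a : ℝ) * sv)
      + (lam.im - (b : ℝ) * sv) * (lam.im - (b : ℝ) * sv) ≤ ((71 / 100) * sv) ^ 2 := by
    nlinarith
  calc Real.sqrt ((lam.re - (a : ℝ) * sv) * (lam.re - (a : ℝ) * sv)
        + (lam.im - (b : ℝ) * sv) * (lam.im - (b : ℝ) * sv))
      ≤ Real.sqrt (((71 / 100) * sv) ^ 2) := Real.sqrt_le_sqrt hsum
    _ = (71 / 100) * sv := Real.sqrt_sq (by positivity)

lemma choose_bound (n k : ℕ) (hk : 0 < k) :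
    (n.choose k : ℝ) ≤ (Real.exp 1 * n / k) ^ k := by
  have hkpos : (0 : ℝ) < k := by exact_mod_cast hk
  have hfact : (0 : ℝ) < k.factorial := by exact_mod_cast k.factorial_pos
  have h1 : (k.factorial : ℝ) * n.choose k ≤ (n : ℝ) ^ k := by
    have := Nat.descFactorial_le_pow n k
    rw [Nat.descFactorial_eq_factorial_mul_choose] at this
    exact_mod_cast this
  have h2 : ((k : ℝ)) ^ k / k.factorial ≤ Real.exp k := by
    refine le_trans ?_ (Real.sum_le_exp_of_nonneg hkpos.le (k + 1))
    exact Finset.single_le_sum (f := fun i => (k : ℝ) ^ i / i.factorial)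
      (fun i _ => by positivity) (Finset.self_mem_range_succ k)
  have h3 : ((k : ℝ)) ^ k ≤ Real.exp 1 ^ k * k.factorial := by
    rw [Real.exp_one_pow]
    rw [div_le_iff₀ hfact] at h2
    exact h2
  have hchoose0 : (0 : ℝ) ≤ (n.choose k : ℝ) := Nat.cast_nonneg _
  rw [div_pow, mul_pow, le_div_iff₀ (by positivity)]
  calc (n.choose k : ℝ) * (k : ℝ) ^ k
      ≤ (n.choose k : ℝ) * (Real.exp 1 ^ k * k.factorial) := by
        exact mul_le_mul_of_nonneg_left h3 hchoose0
    _ = Real.exp 1 ^ k * ((k.factorial : ℝ) * n.choose k) := by ring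
    _ ≤ Real.exp 1 ^ k * (n : ℝ) ^ k := by
        exact mul_le_mul_of_nonneg_left h1 (by positivity)

/-- Reduction of no-gaps delocalization to invertibility of submatrices
(Proposition "Reduction of delocalization to invertibility"). -/
theorem reduction_delocalization_to_invertibility
    (n : ℕ) (Ω : Type) [MeasureSpace Ω] [IsProbabilityMeasure (ℙ : Measure Ω)]
    (A : Ω → Matrix (Fin n) (Fin n) ℂ)
    (M ε p₀ δ : ℝ) (hM : 1 ≤ M)
    (hε : 0 < ε) (hε' : ε < 1 / 2) (hp₀ : 0 < p₀) (hp₀' : p₀ < 1 / 2)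
    (hδ : 0 < δ) (hδ' : δ < 1 / 2)
    -- `ε n` is a positive integer
    (hεn : ∃ k : ℕ, 0 < k ∧ (k : ℝ) = ε * n)
    -- invertibility assumption for every fixed `λ₀` and every fixed `I`
    (hinv : ∀ lam₀ : ℂ, ‖lam₀‖ ≤ M * Real.sqrt n →
      ∀ I : Finset (Fin n), (I.card : ℝ) = ε * n →
        (ℙ ({ω | sMin (colsOutside (A ω - lam₀ • (1 : Matrix (Fin n) (Fin n) ℂ)) I) ≤
              8 * δ * M * Real.sqrt n} ∩
            {ω | ∀ x : Fin n → ℂ,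
              eNormC (A ω *ᵥ x) ≤ M * Real.sqrt n * eNormC x})).toReal ≤ p₀) :
    -- conclusion: the localization event together with the boundedness event is unlikely
    (ℙ ({ω | ∃ (v : Fin n → ℂ) (lam : ℂ), eNormC v = 1 ∧ A ω *ᵥ v = lam • v ∧
          ∃ I : Finset (Fin n), (I.card : ℝ) = ε * n ∧ eNormSub v I < δ} ∩
        {ω | ∀ x : Fin n → ℂ,
          eNormC (A ω *ᵥ x) ≤ M * Real.sqrt n * eNormC x})).toReal ≤
      5 / δ ^ 2 * (Real.exp 1 / ε) ^ (ε * n) * p₀ := by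
  classical
  obtain ⟨k, hk0, hkε⟩ := hεn
  have hn0 : 0 < n := by
    rcases Nat.eq_zero_or_pos n with h | h
    · subst h
      have : (k : ℝ) = 0 := by simpa using hkε
      exact absurd (Nat.cast_eq_zero.mp this) hk0.ne'
    · exact h
  have hnR : (0 : ℝ) < n := by exact_mod_cast hn0
  have hkR : (0 : ℝ) < k := by exact_mod_cast hk0
  have hkn : k ≤ n := by
    have h1 : (k : ℝ) < n := by
      rw [hkε]
      nlinarith only [hnR, hε', mul_lt_mul_of_pos_right hε' hnR]
    exact_mod_cast h1.le
  have hsq : 0 < Real.sqrt n := Real.sqrt_pos.mpr hnR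
  have hM0 : (0 : ℝ) < M := lt_of_lt_of_le one_pos hM
  obtain ⟨R, hR⟩ : ∃ R : ℝ, R = M * Real.sqrt n := ⟨_, rfl⟩
  have hR0 : 0 < R := by rw [hR]; positivity
  set m : ℕ := ⌈1 / (3 * δ)⌉₊ with hmdef
  have hm1 : (1 : ℝ) / (3 * δ) ≤ (m : ℝ) := Nat.le_ceil _
  have hm2 : (m : ℝ) ≤ 1 / (3 * δ) + 1 := (Nat.ceil_lt_add_one (by positivity)).le
  have hm0 : (0 : ℝ) < 2 * (m : ℝ) + 1 := by positivity
  obtain ⟨sv, hsv⟩ : ∃ sv : ℝ, sv = 2 * R / (2 * (m : ℝ) + 1) := ⟨_, rfl⟩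
  have hsv0 : 0 < sv := by rw [hsv]; positivity
  have hsv3 : sv ≤ 3 * δ * R := by
    have h1 : (1 : ℝ) ≤ (m : ℝ) * (3 * δ) := (div_le_iff₀ (by positivity)).mp hm1
    rw [hsv, div_le_iff₀ hm0]
    nlinarith only [mul_le_mul_of_nonneg_right h1 (by positivity : (0:ℝ) ≤ 2 * R),
      (mul_pos hδ hR0).le]
  have hRs : R ≤ ((m : ℝ) + 1 / 2) * sv := by
    rw [hsv]
    have h1 : ((m : ℝ) + 1 / 2) * (2 * R / (2 * (m : ℝ) + 1)) = R := by
      field_simp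
    rw [h1]
  -- the finite families
  set grid : Finset (ℤ × ℤ) := Finset.Icc (-(m : ℤ)) m ×ˢ Finset.Icc (-(m : ℤ)) m with hgrid
  set net : Finset ℂ := grid.image
    (fun p => projD R (((p.1 : ℝ) * sv : ℝ) + ((p.2 : ℝ) * sv : ℝ) * Complex.I)) with hnet
  set pcs : Finset (Finset (Fin n)) := Finset.powersetCard k (Finset.univ) with hpcs
  set Ev : ℂ → Finset (Fin n) → Set Ω := fun lam₀ I =>
    {ω | sMin (colsOutside (A ω - lam₀ • (1 : Matrix (Fin n) (Fin n) ℂ)) I) ≤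
        8 * δ * M * Real.sqrt n} ∩
    {ω | ∀ x : Fin n → ℂ, eNormC (A ω *ᵥ x) ≤ M * Real.sqrt n * eNormC x} with hEv
  -- the inclusion of events
  have hsub : ({ω | ∃ (v : Fin n → ℂ) (lam : ℂ), eNormC v = 1 ∧ A ω *ᵥ v = lam • v ∧
          ∃ I : Finset (Fin n), (I.card : ℝ) = ε * n ∧ eNormSub v I < δ} ∩
        {ω | ∀ x : Fin n → ℂ,
          eNormC (A ω *ᵥ x) ≤ M * Real.sqrt n * eNormC x})
      ⊆ ⋃ lam₀ ∈ net, ⋃ I ∈ pcs, Ev lam₀ I := by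
    rintro ω ⟨hloc, hop⟩
    obtain ⟨v, lam, hv1, heig, I, hIc, hvI⟩ := hloc
    have hop' : ∀ x : Fin n → ℂ, eNormC (A ω *ᵥ x) ≤ M * Real.sqrt n * eNormC x := hop
    have hIk : I.card = k := by
      have h1 : (I.card : ℝ) = (k : ℝ) := by rw [hIc, hkε]
      exact_mod_cast h1
    have hAv : eNormC (A ω *ᵥ v) = ‖lam‖ := by
      rw [heig, eNormC_smul, hv1, mul_one]
    have hlam : ‖lam‖ ≤ R := by
      have h1 := hop' v
      rw [hAv, hv1, mul_one] at h1
      rw [hR]; exact h1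
    obtain ⟨a, b, ha, hb, hdist⟩ := grid_cover sv hsv0 m R hRs lam hlam
    set g : ℂ := (((a : ℝ) * sv : ℝ) + ((b : ℝ) * sv : ℝ) * Complex.I) with hg
    set lam₀ : ℂ := projD R g with hlam₀
    have hlam₀net : lam₀ ∈ net := by
      rw [hnet]
      refine Finset.mem_image.mpr ⟨(a, b), ?_, rfl⟩
      rw [hgrid]
      refine Finset.mem_product.mpr ⟨Finset.mem_Icc.mpr (abs_le.mp ha),
        Finset.mem_Icc.mpr (abs_le.mp hb)⟩
    have hlam₀R : ‖lam₀‖ ≤ R := abs_projD_le hR0.le g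
    have hnear : ‖lam - lam₀‖ ≤ 2 * ((71 / 100) * sv) := by
      refine le_trans (abs_sub_projD hR0.le g lam hlam) ?_
      linarith only [hdist]
    set B : Matrix (Fin n) (Fin n) ℂ := A ω - lam₀ • (1 : Matrix (Fin n) (Fin n) ℂ) with hB
    set w : Fin n → ℂ := fun j => if j ∈ I then v j else 0 with hw
    set u : {j : Fin n // j ∉ I} → ℂ := fun j => v j with hu
    have hsumv : ∑ i, ‖v i‖ ^ 2 = 1 := Real.sqrt_eq_one.mp hv1
    have husq : eNormC u ^ 2 = 1 - eNormSub v I ^ 2 := by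
      rw [hu, eNormC_subtype_sq v I, hsumv]
    have hvI0 : 0 ≤ eNormSub v I := Real.sqrt_nonneg _
    have hδ2 : eNormSub v I ^ 2 < δ ^ 2 := by nlinarith only [hvI, hvI0]
    have hδ4 : δ ^ 2 < 1 / 4 := by nlinarith only [hδ, hδ']
    have hu34 : (3 : ℝ) / 4 < eNormC u ^ 2 := by
      rw [husq]
      linarith only [hδ2, hδ4]
    have hu0 : 0 < eNormC u := by
      rcases (eNormC_nonneg u).lt_or_eq with h | h
      · exact h
      · exfalso
        rw [← h] at hu34
        norm_num at hu34
    have huge : (86 : ℝ) / 100 ≤ eNormC u := by nlinarith only [hu34, hu0.le]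
    have hBv : B *ᵥ v = (lam - lam₀) • v := by
      rw [hB, Matrix.sub_mulVec, heig, Matrix.smul_mulVec, Matrix.one_mulVec, ← sub_smul]
    have hBvn : eNormC (B *ᵥ v) ≤ 2 * ((71 / 100) * sv) := by
      rw [hBv, eNormC_smul, hv1, mul_one]
      exact hnear
    have hwn : eNormC w = eNormSub v I := eNormC_maskI v I
    have hBw : B *ᵥ w = A ω *ᵥ w - lam₀ • w := by
      rw [hB, Matrix.sub_mulVec, Matrix.smul_mulVec, Matrix.one_mulVec]
    have hBwn : eNormC (B *ᵥ w) ≤ 2 * R * δ := by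
      rw [hBw]
      calc eNormC (A ω *ᵥ w - lam₀ • w)
          ≤ eNormC (A ω *ᵥ w) + eNormC (lam₀ • w) := eNormC_sub_le _ _
        _ ≤ M * Real.sqrt n * eNormC w + ‖lam₀‖ * eNormC w := by
            refine add_le_add (hop' w) ?_
            rw [eNormC_smul]
        _ ≤ R * δ + R * δ := by
            rw [hwn]
            refine add_le_add ?_ ?_
            · rw [← hR]
              exact mul_le_mul_of_nonneg_left hvI.le hR0.le
            · exact mul_le_mul hlam₀R hvI.le hvI0 hR0.le
        _ = 2 * R * δ := by ring
    have hcols : colsOutside B I *ᵥ u = B *ᵥ v - B *ᵥ w := by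
      rw [hu, hw]; exact cols_decomp B I v
    have hcoln : eNormC (colsOutside B I *ᵥ u) ≤ 2 * ((71 / 100) * sv) + 2 * R * δ := by
      rw [hcols]
      exact le_trans (eNormC_sub_le _ _) (add_le_add hBvn hBwn)
    set c : ℂ := ((eNormC u : ℝ) : ℂ)⁻¹ with hc
    have hcabs : ‖c‖ = (eNormC u)⁻¹ := by
      rw [hc, norm_inv, Complex.norm_real, Real.norm_eq_abs, abs_of_pos hu0]
    have hx1 : eNormC (c • u) = 1 := by
      rw [eNormC_smul, hcabs, inv_mul_cancel₀ hu0.ne']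
    have hsmin0 : sMin (colsOutside B I) ≤ eNormC (colsOutside B I *ᵥ (c • u)) :=
      sMin_le _ _ hx1
    have hsmin2 : sMin (colsOutside B I)
        ≤ (eNormC u)⁻¹ * (2 * ((71 / 100) * sv) + 2 * R * δ) := by
      rw [Matrix.mulVec_smul, eNormC_smul, hcabs] at hsmin0
      refine le_trans hsmin0 ?_
      exact mul_le_mul_of_nonneg_left hcoln (by positivity)
    have hinvu : (eNormC u)⁻¹ ≤ 100 / 86 := by
      have h5 := inv_anti₀ (by norm_num : (0:ℝ) < 86 / 100) huge
      calc (eNormC u)⁻¹ ≤ ((86 : ℝ) / 100)⁻¹ := h5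
        _ = 100 / 86 := by norm_num
    have hnum : 2 * ((71 / 100) * sv) + 2 * R * δ ≤ (313 / 50) * (δ * R) := by
      linarith only [hsv3]
    have hnum0 : (0 : ℝ) ≤ 2 * ((71 / 100) * sv) + 2 * R * δ := by positivity
    have hfinal : sMin (colsOutside B I) ≤ 8 * δ * M * Real.sqrt n := by
      have h6 : sMin (colsOutside B I) ≤ (100 / 86) * ((313 / 50) * (δ * R)) := by
        refine le_trans hsmin2 ?_
        exact mul_le_mul hinvu hnum hnum0 (by norm_num)
      have h7 : (100 / 86 : ℝ) * ((313 / 50) * (δ * R)) ≤ 8 * (δ * R) := by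
        linarith only [(mul_pos hδ hR0).le]
      have h8 : (8 : ℝ) * (δ * R) = 8 * δ * M * Real.sqrt n := by rw [hR]; ring
      exact le_trans (le_trans h6 h7) (le_of_eq h8)
    have hIpcs : I ∈ pcs := by
      rw [hpcs]
      exact Finset.mem_powersetCard.mpr ⟨Finset.subset_univ I, hIk⟩
    refine Set.mem_iUnion₂.mpr ⟨lam₀, hlam₀net, Set.mem_iUnion₂.mpr ⟨I, hIpcs, ?_⟩⟩
    simp only [hEv]
    exact ⟨hfinal, hop⟩
  -- union bound
  have hEbound : ∀ lam₀ ∈ net, ∀ I ∈ pcs, ℙ (Ev lam₀ I) ≤ ENNReal.ofReal p₀ := by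
    intro lam₀ hl I hI
    have h1 : ‖lam₀‖ ≤ M * Real.sqrt n := by
      rw [hnet] at hl
      obtain ⟨p, _, rfl⟩ := Finset.mem_image.mp hl
      rw [← hR]
      exact abs_projD_le hR0.le _
    have h2 : (I.card : ℝ) = ε * n := by
      rw [hpcs, Finset.mem_powersetCard] at hI
      rw [hI.2, hkε]
    have h3 := hinv lam₀ h1 I h2
    rw [ENNReal.le_ofReal_iff_toReal_le (measure_ne_top _ _) hp₀.le]
    simp only [hEv]
    exact h3
  have hcard : ℙ ({ω | ∃ (v : Fin n → ℂ) (lam : ℂ), eNormC v = 1 ∧ A ω *ᵥ v = lam • v ∧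
          ∃ I : Finset (Fin n), (I.card : ℝ) = ε * n ∧ eNormSub v I < δ} ∩
        {ω | ∀ x : Fin n → ℂ,
          eNormC (A ω *ᵥ x) ≤ M * Real.sqrt n * eNormC x})
      ≤ (net.card : ENNReal) * ((pcs.card : ENNReal) * ENNReal.ofReal p₀) := by
    refine le_trans (measure_mono hsub) ?_
    refine le_trans (measure_biUnion_finset_le net _) ?_
    calc ∑ lam₀ ∈ net, ℙ (⋃ I ∈ pcs, Ev lam₀ I)
        ≤ ∑ _lam₀ ∈ net, ((pcs.card : ENNReal) * ENNReal.ofReal p₀) := by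
          refine Finset.sum_le_sum fun lam₀ hl => ?_
          refine le_trans (measure_biUnion_finset_le pcs _) ?_
          calc ∑ I ∈ pcs, ℙ (Ev lam₀ I)
              ≤ ∑ _I ∈ pcs, ENNReal.ofReal p₀ :=
                Finset.sum_le_sum fun I hI => hEbound lam₀ hl I hI
            _ = (pcs.card : ENNReal) * ENNReal.ofReal p₀ := by
                rw [Finset.sum_const, nsmul_eq_mul]
      _ = (net.card : ENNReal) * ((pcs.card : ENNReal) * ENNReal.ofReal p₀) := by
          rw [Finset.sum_const, nsmul_eq_mul]
  have hcard' : ℙ ({ω | ∃ (v : Fin n → ℂ) (lam : ℂ), eNormC v = 1 ∧ A ω *ᵥ v = lam • v ∧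
          ∃ I : Finset (Fin n), (I.card : ℝ) = ε * n ∧ eNormSub v I < δ} ∩
        {ω | ∀ x : Fin n → ℂ,
          eNormC (A ω *ᵥ x) ≤ M * Real.sqrt n * eNormC x})
      ≤ ENNReal.ofReal ((net.card : ℝ) * ((pcs.card : ℝ) * p₀)) := by
    refine hcard.trans (le_of_eq ?_)
    rw [ENNReal.ofReal_mul (Nat.cast_nonneg _), ENNReal.ofReal_mul (Nat.cast_nonneg _),
      ENNReal.ofReal_natCast, ENNReal.ofReal_natCast]
  refine le_trans (ENNReal.toReal_le_of_le_ofReal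
    (mul_nonneg (Nat.cast_nonneg _) (mul_nonneg (Nat.cast_nonneg _) hp₀.le)) hcard') ?_
  -- counting estimates
  have hnetcard : (net.card : ℝ) ≤ (2 * (m : ℝ) + 1) ^ 2 := by
    have h1 : net.card ≤ grid.card := Finset.card_image_le
    have h2 : grid.card = (2 * m + 1) * (2 * m + 1) := by
      rw [hgrid, Finset.card_product, Int.card_Icc]
      have h3 : ((m : ℤ) + 1 - -(m : ℤ)).toNat = 2 * m + 1 := by omega
      rw [h3]
    calc (net.card : ℝ) ≤ (grid.card : ℝ) := by exact_mod_cast h1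
      _ = (2 * (m : ℝ) + 1) ^ 2 := by rw [h2]; push_cast; ring
  have hmδ : (2 * (m : ℝ) + 1) ^ 2 ≤ 5 / δ ^ 2 := by
    have h3 : 2 * (m : ℝ) + 1 ≤ 13 / (6 * δ) := by
      have hB : (2 : ℝ) * (1 / (3 * δ)) + 3 ≤ 13 / (6 * δ) := by
        have h6 : (13 : ℝ) / (6 * δ) - (2 * (1 / (3 * δ)) + 3) = 3 / (2 * δ) - 3 := by
          field_simp
          ring
        have h7 : (3 : ℝ) ≤ 3 / (2 * δ) := by
          rw [le_div_iff₀ (by positivity)]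
          linarith only [hδ']
        linarith only [h6, h7]
      linarith only [hm2, hB]
    have h4 : (0 : ℝ) ≤ 2 * (m : ℝ) + 1 := by positivity
    calc (2 * (m : ℝ) + 1) ^ 2 ≤ (13 / (6 * δ)) ^ 2 := pow_le_pow_left₀ h4 h3 2
      _ = 169 / (36 * δ ^ 2) := by
          rw [div_pow, mul_pow]
          norm_num
      _ ≤ 5 / δ ^ 2 := by
          rw [div_le_div_iff₀ (by positivity) (by positivity)]
          linarith only [sq_nonneg δ]
  have hnet5 : (net.card : ℝ) ≤ 5 / δ ^ 2 := hnetcard.trans hmδ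
  have hchoose : (pcs.card : ℝ) ≤ (Real.exp 1 / ε) ^ (ε * (n : ℝ)) := by
    rw [hpcs, Finset.card_powersetCard, Finset.card_univ, Fintype.card_fin]
    rw [← hkε, Real.rpow_natCast]
    have hee : Real.exp 1 / ε = Real.exp 1 * n / k := by
      rw [div_eq_div_iff hε.ne' hkR.ne']
      rw [hkε]; ring
    rw [hee]
    exact choose_bound n k hk0
  have hnet0 : (0 : ℝ) ≤ (net.card : ℝ) := Nat.cast_nonneg _
  have hpow0 : (0 : ℝ) ≤ (Real.exp 1 / ε) ^ (ε * (n : ℝ)) :=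
    Real.rpow_nonneg (by positivity) _
  calc (net.card : ℝ) * ((pcs.card : ℝ) * p₀)
      ≤ (5 / δ ^ 2) * ((Real.exp 1 / ε) ^ (ε * (n : ℝ)) * p₀) := by
        refine mul_le_mul hnet5 ?_ (mul_nonneg (Nat.cast_nonneg _) hp₀.le) (by positivity)
        exact mul_le_mul_of_nonneg_right hchoose hp₀.le
    _ = 5 / δ ^ 2 * (Real.exp 1 / ε) ^ (ε * (n : ℝ)) * p₀ := by ring
end

section
/- There is an absolute constant C₀ with the following property. Let X = (X₁,…,Xₙ) have independent real coordinates with densities bounded by 1 almost everywhere, and let P be the orthogonal projection in ℝⁿ onto a d-dimensional subspace with ‖P e₁‖₂ ≥ 1/2. Let Q be the orthogonal projection in ℝⁿ whose kernel is the span of ker(P) and the vector P e₁ (so Q has rank d − 1). Let M ≥ C₀. If P( ‖QX‖₂ ≤ t√(d−1) ) ≤ (Mt)^{d−1} for all t ≥ 0, then P( ‖PX‖₂ ≤ t√d ) ≤ (Mt)^d for all t ≥ 0. -/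
open MeasureTheory ProbabilityTheory Matrix

/-- The Euclidean norm of a finitely supported real vector. -/
noncomputable def eNormR {ι : Type*} [Fintype ι] (v : ι → ℝ) : ℝ :=
  Real.sqrt (∑ i, (v i) ^ 2)


lemma dot_mulVec_symm {n : ℕ} (A : Matrix (Fin n) (Fin n) ℝ) (hA : Aᵀ = A)
    (u v : Fin n → ℝ) : (A *ᵥ u) ⬝ᵥ v = u ⬝ᵥ (A *ᵥ v) := by
  conv_lhs => rw [← hA, Matrix.mulVec_transpose]
  exact (Matrix.dotProduct_mulVec u A v).symm

lemma projDecomp {n : ℕ} (P Q : Matrix (Fin n) (Fin n) ℝ) (i0 : Fin n)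
    (hPt : Pᵀ = P) (hPP : P * P = P) (hQt : Qᵀ = Q) (hQQ : Q * Q = Q)
    (hker : LinearMap.ker Q.mulVecLin =
      LinearMap.ker P.mulVecLin ⊔ Submodule.span ℝ {P *ᵥ Pi.single i0 1})
    (hσ : (∑ i, ((P *ᵥ Pi.single i0 1) i)^2) ≠ 0) :
    ∀ v, P *ᵥ v = Q *ᵥ v +
      ((∑ i, ((P *ᵥ Pi.single i0 1) i)^2)⁻¹ * ((P *ᵥ Pi.single i0 1) ⬝ᵥ v)) •
        (P *ᵥ Pi.single i0 1) := by
  set w := P *ᵥ Pi.single i0 1 with hw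
  set σ := ∑ i, (w i)^2 with hσdef
  have hww : w ⬝ᵥ w = σ := by
    simp [dotProduct, hσdef, sq]
  have hPw : P *ᵥ w = w := by
    rw [hw, Matrix.mulVec_mulVec, hPP]
  have hkerPQ : ∀ v, P *ᵥ v = 0 → Q *ᵥ v = 0 := by
    intro v hv
    have : v ∈ LinearMap.ker P.mulVecLin := by simpa [LinearMap.mem_ker] using hv
    have : v ∈ LinearMap.ker Q.mulVecLin := by
      rw [hker]; exact Submodule.mem_sup_left this
    simpa [LinearMap.mem_ker] using this
  have hQw : Q *ᵥ w = 0 := by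
    have : w ∈ LinearMap.ker Q.mulVecLin := by
      rw [hker]
      exact Submodule.mem_sup_right (Submodule.mem_span_singleton_self w)
    simpa [LinearMap.mem_ker] using this
  have hQP : ∀ v, Q *ᵥ (P *ᵥ v) = Q *ᵥ v := by
    intro v
    have h0 : P *ᵥ (P *ᵥ v - v) = 0 := by
      rw [Matrix.mulVec_sub, Matrix.mulVec_mulVec, hPP, sub_self]
    have := hkerPQ _ h0
    rw [Matrix.mulVec_sub, sub_eq_zero] at this
    exact this
  have hQPmat : Q * P = Q := by
    have : ∀ j, (Q * P)ᵀ j = Qᵀ j := by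
      intro j
      show (Q * P).col j = Q.col j
      rw [← Matrix.mulVec_single_one, ← Matrix.mulVec_single_one, ← Matrix.mulVec_mulVec, hQP]
    have ht : (Q * P)ᵀ = Qᵀ := funext this
    have := congrArg Matrix.transpose ht
    simpa using this
  have hPQ : ∀ v, P *ᵥ (Q *ᵥ v) = Q *ᵥ v := by
    intro v
    have hmat : P * Q = Q := by
      have : (Q * P)ᵀ = Pᵀ * Qᵀ := Matrix.transpose_mul Q P
      rw [hQPmat, hPt, hQt] at this
      exact this.symm
    rw [Matrix.mulVec_mulVec, hmat]
  intro v
  -- decompose v - Q v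
  have hrker : (v - Q *ᵥ v) ∈ LinearMap.ker Q.mulVecLin := by
    have : Q *ᵥ (v - Q *ᵥ v) = 0 := by
      rw [Matrix.mulVec_sub, Matrix.mulVec_mulVec, hQQ, sub_self]
    simpa [LinearMap.mem_ker] using this
  rw [hker] at hrker
  obtain ⟨k, hk, z, hz, hkz⟩ := Submodule.mem_sup.mp hrker
  obtain ⟨a, haz⟩ := Submodule.mem_span_singleton.mp hz
  have hPk : P *ᵥ k = 0 := by simpa [LinearMap.mem_ker] using hk
  have hQk : Q *ᵥ k = 0 := hkerPQ _ hPk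
  rw [← haz] at hkz
  have hv : v = Q *ᵥ v + (k + a • w) := by rw [hkz]; abel
  -- compute w ⬝ᵥ v
  have hwQ : w ⬝ᵥ (Q *ᵥ v) = 0 := by
    rw [← dot_mulVec_symm Q hQt w v, hQw, zero_dotProduct]
  have hwk : w ⬝ᵥ k = 0 := by
    rw [hw, dot_mulVec_symm P hPt (Pi.single i0 1) k, hPk, dotProduct_zero]
  have hwv : w ⬝ᵥ v = a * σ := by
    conv_lhs => rw [hv]
    rw [dotProduct_add, dotProduct_add, hwQ, hwk,
      dotProduct_smul, hww]
    simp [smul_eq_mul]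
  have hPv : P *ᵥ v = Q *ᵥ v + a • w := by
    conv_lhs => rw [hv]
    rw [Matrix.mulVec_add, Matrix.mulVec_add, hPQ, hPk, Matrix.mulVec_smul, hPw]
    simp
  rw [hPv, hwv]
  congr 1
  field_simp


lemma joint_law_eq_pi {n : ℕ} {Ω : Type} [MeasureSpace Ω]
    [IsProbabilityMeasure (ℙ : Measure Ω)] (X : Fin n → Ω → ℝ)
    (hX : ∀ i, Measurable (X i))
    (hind : iIndepFun X ℙ) :
    Measure.map (fun ω i => X i ω) ℙ
      = Measure.pi (fun i => Measure.map (X i) ℙ) := by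
  haveI : ∀ i, IsProbabilityMeasure (Measure.map (X i) ℙ) :=
    fun i => Measure.isProbabilityMeasure_map (hX i).aemeasurable
  have hT : Measurable (fun ω i => X i ω) := measurable_pi_iff.mpr hX
  refine (Measure.pi_eq fun s hs => ?_).symm
  rw [Measure.map_apply hT (MeasurableSet.univ_pi hs)]
  have hpre : (fun ω i => X i ω) ⁻¹' (Set.univ.pi s) = ⋂ i ∈ Finset.univ, X i ⁻¹' s i := by
    ext ω; simp [Set.mem_pi]
  rw [hpre, hind.measure_inter_preimage_eq_mul Finset.univ (fun i _ => hs i)]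
  exact Finset.prod_congr rfl fun i _ =>
    (Measure.map_apply (hX i) (hs i)).symm

open Set in

set_option maxHeartbeats 2000000 in
lemma core_estimate {m : ℕ} (μ : Fin (m+1) → Measure ℝ)
    [hprob : ∀ i, IsProbabilityMeasure (μ i)] (hμ : ∀ i, μ i ≤ volume)
    (P Q : Matrix (Fin (m+1)) (Fin (m+1)) ℝ)
    (w : Fin (m+1) → ℝ) (σ : ℝ)
    (hσ : σ = ∑ i, (w i)^2) (hσpos : 0 < σ) (hw0 : w 0 = σ)
    (hshalf : 1/2 ≤ Real.sqrt σ)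
    (hQe : Q *ᵥ Pi.single (0 : Fin (m+1)) 1 = 0)
    (hquad : ∀ x, ∑ i, ((P *ᵥ x) i)^2 = ∑ i, ((Q *ᵥ x) i)^2 + σ⁻¹ * (w ⬝ᵥ x)^2)
    (d : ℕ) (hd : 1 ≤ d) (M : ℝ) (hM : 16 ≤ M)
    (hhyp : ∀ u : ℝ, 0 ≤ u →
      Measure.pi μ {x | Real.sqrt (∑ i, ((Q *ᵥ x) i)^2) ≤ u * Real.sqrt ((d:ℝ) - 1)}
        ≤ ENNReal.ofReal ((M * u) ^ (d-1)))
    (t : ℝ) (ht : 0 ≤ t) :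
    Measure.pi μ {x | ∑ i, ((P *ᵥ x) i)^2 ≤ t^2 * d}
      ≤ ENNReal.ofReal ((M*t)^d) := by
  have hMpos : (0:ℝ) < M := lt_of_lt_of_le (by norm_num) hM
  -- coordinate-1 column of Q vanishes
  have hQcol : ∀ i, Q i 0 = 0 := by
    intro i
    have := congrFun hQe i
    simpa [Matrix.mulVec_single] using this
  -- the auxiliary functions on the remaining coordinates
  set z : (Fin m → ℝ) → Fin (m+1) → ℝ := fun y i => ∑ j, Q i (Fin.succ j) * y j with hzdef
  have hz : ∀ (a : ℝ) (y : Fin m → ℝ), Q *ᵥ (Fin.cons a y) = z y := by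
    intro a y
    funext i
    rw [Matrix.mulVec, dotProduct, Fin.sum_univ_succ]
    simp [hQcol i, hzdef]
  set c : (Fin m → ℝ) → ℝ := fun y => ∑ j, w (Fin.succ j) * y j with hcdef
  have hdot : ∀ (a : ℝ) (y : Fin m → ℝ), w ⬝ᵥ (Fin.cons a y) = σ * a + c y := by
    intro a y
    rw [dotProduct, Fin.sum_univ_succ]
    simp [hw0, hcdef]
  set ζ : (Fin m → ℝ) → ℝ := fun y => ∑ i, (z y i)^2 with hζdef
  have hζmeas : Measurable ζ := by
    apply Finset.measurable_sum
    intro i _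
    exact (Finset.measurable_sum _ fun j _ =>
      (measurable_pi_apply j).const_mul _).pow_const 2
  have hζnn : ∀ y, 0 ≤ ζ y := fun y => Finset.sum_nonneg fun i _ => sq_nonneg _
  set h : (Fin m → ℝ) → ℝ := fun y => Real.sqrt (t^2*d - ζ y) with hhdef
  have hhmeas : Measurable h := (measurable_const.sub hζmeas).sqrt
  have hhnn : ∀ y, 0 ≤ h y := fun y => Real.sqrt_nonneg _
  -- the product decomposition
  set ν : Measure (Fin m → ℝ) := Measure.pi (fun j => μ ((0 : Fin (m+1)).succAbove j)) with hνdef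
  haveI : IsProbabilityMeasure ν := by
    rw [hνdef]; infer_instance
  set e := MeasurableEquiv.piFinSuccAbove (fun _ : Fin (m+1) => ℝ) 0 with hedef
  have hmape : Measure.map e (Measure.pi μ) = (μ 0).prod ν :=
    (measurePreserving_piFinSuccAbove μ 0).map_eq
  have hesymm : ∀ (p : ℝ × (Fin m → ℝ)), e.symm p = Fin.cons p.1 p.2 := by
    intro p
    simp [hedef, MeasurableEquiv.piFinSuccAbove_symm_apply, Fin.insertNthEquiv,
      Fin.insertNth_zero']
  have hπρ : ∀ (A : Set (Fin (m+1) → ℝ)), MeasurableSet A →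
      Measure.pi μ A = ((μ 0).prod ν) (e.symm ⁻¹' A) := by
    intro A hA
    have h1 : e ⁻¹' (e.symm ⁻¹' A) = A := by
      ext x; simp
    rw [← hmape, Measure.map_apply e.measurable (e.symm.measurable hA), h1]
  -- measurability of the events
  have hQmeas : Measurable (fun x : Fin (m+1) → ℝ => ∑ i, ((Q *ᵥ x) i)^2) := by
    simp only [Matrix.mulVec, dotProduct]
    exact Finset.measurable_sum _ fun i _ =>
      (Finset.measurable_sum _ fun j _ =>
        (measurable_pi_apply j).const_mul _).pow_const 2
  have hPmeas : Measurable (fun x : Fin (m+1) → ℝ => ∑ i, ((P *ᵥ x) i)^2) := by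
    simp only [Matrix.mulVec, dotProduct]
    exact Finset.measurable_sum _ fun i _ =>
      (Finset.measurable_sum _ fun j _ =>
        (measurable_pi_apply j).const_mul _).pow_const 2
  have hAmeas : MeasurableSet {x : Fin (m+1) → ℝ | ∑ i, ((P *ᵥ x) i)^2 ≤ t^2 * d} :=
    measurableSet_le hPmeas measurable_const
  -- step 1 : bound by the lintegral of 4 * h
  have step1 : Measure.pi μ {x | ∑ i, ((P *ᵥ x) i)^2 ≤ t^2 * d}
      ≤ ∫⁻ y, ENNReal.ofReal (4 * h y) ∂ν := by
    rw [hπρ _ hAmeas]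
    have hS : MeasurableSet (e.symm ⁻¹' {x : Fin (m+1) → ℝ | ∑ i, ((P *ᵥ x) i)^2 ≤ t^2 * d}) :=
      e.symm.measurable hAmeas
    rw [Measure.prod_apply_symm hS]
    refine lintegral_mono fun y => ?_
    dsimp only
    -- the section set
    have hsec : (fun a => (a, y)) ⁻¹' (e.symm ⁻¹' {x | ∑ i, ((P *ᵥ x) i)^2 ≤ t^2 * d})
        = {a : ℝ | ζ y + σ⁻¹ * (σ * a + c y)^2 ≤ t^2*d} := by
      ext a
      simp only [Set.mem_preimage, Set.mem_setOf_eq, hesymm, hquad, hz, hdot, hζdef]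
    rw [hsec]
    -- the section is contained in an interval of length `2 √σ h / σ ≤ 4 h`
    have hsub : {a : ℝ | ζ y + σ⁻¹ * (σ * a + c y)^2 ≤ t^2*d} ⊆
        Set.Icc ((-(Real.sqrt σ * h y) - c y)/σ) ((Real.sqrt σ * h y - c y)/σ) := by
      intro a ha
      simp only [Set.mem_setOf_eq] at ha
      have hD : 0 ≤ t^2*d - ζ y := by
        nlinarith [sq_nonneg (σ * a + c y), inv_nonneg.mpr hσpos.le,
          mul_nonneg (inv_nonneg.mpr hσpos.le) (sq_nonneg (σ * a + c y))]
      have hsq : (σ * a + c y)^2 ≤ σ * (t^2*d - ζ y) := by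
        have := (inv_mul_le_iff₀ hσpos).mp (by linarith : σ⁻¹ * (σ * a + c y)^2 ≤ t^2*d - ζ y)
        linarith
      have hh2 : (h y)^2 = t^2*d - ζ y := Real.sq_sqrt hD
      have hs2 : (Real.sqrt σ)^2 = σ := Real.sq_sqrt hσpos.le
      have habs : (σ * a + c y)^2 ≤ (Real.sqrt σ * h y)^2 := by
        rw [mul_pow, hs2, hh2]; exact hsq
      have hsh : 0 ≤ Real.sqrt σ * h y := mul_nonneg (Real.sqrt_nonneg _) (hhnn y)
      obtain ⟨h1, h2⟩ := abs_le_of_sq_le_sq' habs hsh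
      constructor
      · rw [div_le_iff₀ hσpos, mul_comm]; linarith
      · rw [le_div_iff₀ hσpos, mul_comm]; linarith
    calc μ 0 {a : ℝ | ζ y + σ⁻¹ * (σ * a + c y)^2 ≤ t^2*d}
        ≤ μ 0 (Set.Icc ((-(Real.sqrt σ * h y) - c y)/σ) ((Real.sqrt σ * h y - c y)/σ)) :=
          measure_mono hsub
      _ ≤ volume (Set.Icc ((-(Real.sqrt σ * h y) - c y)/σ) ((Real.sqrt σ * h y - c y)/σ)) :=
          Measure.le_iff'.mp (hμ 0) _
      _ = ENNReal.ofReal ((Real.sqrt σ * h y - c y)/σ - ((-(Real.sqrt σ * h y) - c y)/σ)) := by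
          rw [Real.volume_Icc]
      _ ≤ ENNReal.ofReal (4 * h y) := by
          apply ENNReal.ofReal_le_ofReal
          have hss : Real.sqrt σ * Real.sqrt σ = σ := Real.mul_self_sqrt hσpos.le
          rw [div_sub_div_same]
          have : (Real.sqrt σ * h y - c y) - ((-(Real.sqrt σ * h y)) - c y)
              = 2 * (Real.sqrt σ * h y) := by ring
          rw [this, div_le_iff₀ hσpos]
          have h4 : Real.sqrt σ ≥ 1/2 := hshalf
          have e1 : Real.sqrt σ * (1/2) ≤ Real.sqrt σ * Real.sqrt σ :=
            mul_le_mul_of_nonneg_left h4 (Real.sqrt_nonneg σ)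
          have e2 : (0:ℝ) ≤ 4 * h y := by linarith [hhnn y]
          calc 2 * (Real.sqrt σ * h y) = 4 * h y * (Real.sqrt σ * (1/2)) := by ring
            _ ≤ 4 * h y * (Real.sqrt σ * Real.sqrt σ) := mul_le_mul_of_nonneg_left e1 e2
            _ = 4 * h y * σ := by rw [hss]
  -- trivial case t = 0
  rcases eq_or_lt_of_le ht with ht0 | htpos
  · subst ht0
    refine le_trans step1 ?_
    have hzero : ∀ y, ENNReal.ofReal (4 * h y) = 0 := by
      intro y
      have h0 : h y = 0 := by
        apply Real.sqrt_eq_zero_of_nonpos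
        have : ((0:ℝ))^2*(d:ℝ) = 0 := by norm_num
        nlinarith [hζnn y]
      rw [h0]; simp
    rw [lintegral_congr hzero, lintegral_zero]
    exact zero_le
  -- main case t > 0
  by_cases hd1 : d = 1
  · subst hd1
    refine le_trans step1 ?_
    have hb : ∀ y, ENNReal.ofReal (4 * h y) ≤ ENNReal.ofReal (4 * t) := by
      intro y
      apply ENNReal.ofReal_le_ofReal
      have h1 : h y ≤ t := by
        have h2 : t^2*((1:ℕ):ℝ) - ζ y ≤ t^2 := by
          push_cast
          nlinarith [hζnn y]
        calc h y ≤ Real.sqrt (t^2) := Real.sqrt_le_sqrt h2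
          _ = t := Real.sqrt_sq ht
      linarith
    calc ∫⁻ y, ENNReal.ofReal (4 * h y) ∂ν
        ≤ ∫⁻ _, ENNReal.ofReal (4 * t) ∂ν := lintegral_mono hb
      _ = ENNReal.ofReal (4 * t) := by rw [lintegral_const, measure_univ, mul_one]
      _ ≤ ENNReal.ofReal ((M * t)^1) := by
          apply ENNReal.ofReal_le_ofReal
          rw [pow_one]
          exact mul_le_mul_of_nonneg_right (by linarith) ht
  · have hd2 : 2 ≤ d := by omega
    set k := d - 1 with hkdef
    have hdk : d = k + 1 := by omega
    have hk1 : 1 ≤ k := by omega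
    have hkR : ((d:ℝ) - 1) = (k:ℝ) := by rw [hdk]; push_cast; ring
    have hkpos : (0:ℝ) < k := by exact_mod_cast hk1
    have hdpos : (0:ℝ) < d := by positivity
    have htd : (0:ℝ) < t^2*d := by positivity
    set α := Real.sqrt ((d:ℝ)/k) with hαdef
    have hαnn : 0 ≤ α := Real.sqrt_nonneg _
    set T := t * α with hTdef
    have hTnn : 0 ≤ T := mul_nonneg ht hαnn
    set Cst := (M*T)^k with hCdef
    have hCnn : 0 ≤ Cst := pow_nonneg (mul_nonneg hMpos.le hTnn) k
    set b := (k:ℝ)/(2*(t^2*(d:ℝ))) with hbdef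
    have hbpos : 0 < b := by positivity
    -- bound on the tail of h
    have hbound : ∀ r ∈ Set.Ioi (0:ℝ),
        ν {y | r < h y} ≤ ENNReal.ofReal (Cst * Real.exp (-b * r^2)) := by
      intro r hr
      have hr0 : (0:ℝ) ≤ r := le_of_lt hr
      set u := Real.sqrt ((t^2*d - r^2)/k) with hu
      have hunn : 0 ≤ u := Real.sqrt_nonneg _
      have hsub2 : {y | r < h y} ⊆ {y | Real.sqrt (ζ y) ≤ u * Real.sqrt k} := by
        intro y hy
        simp only [Set.mem_setOf_eq] at hy ⊢
        have hr2 : r^2 < t^2*d - ζ y := (Real.lt_sqrt hr0).mp hy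
        have hle : ζ y ≤ t^2*d - r^2 := by linarith
        calc Real.sqrt (ζ y) ≤ Real.sqrt (t^2*d - r^2) := Real.sqrt_le_sqrt hle
          _ = u * Real.sqrt k := by
              rw [hu, ← Real.sqrt_mul
                (div_nonneg (by nlinarith [hζnn y]) hkpos.le) (k:ℝ)]
              congr 1
              field_simp
      have hBmeas : MeasurableSet {x : Fin (m+1) → ℝ |
          Real.sqrt (∑ i, ((Q *ᵥ x) i)^2) ≤ u * Real.sqrt k} :=
        measurableSet_le hQmeas.sqrt measurable_const
      have hid : ν {y | Real.sqrt (ζ y) ≤ u * Real.sqrt k}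
          = Measure.pi μ {x | Real.sqrt (∑ i, ((Q *ᵥ x) i)^2) ≤ u * Real.sqrt k} := by
        rw [hπρ _ hBmeas]
        have hset : (⇑e.symm ⁻¹' {x | Real.sqrt (∑ i, ((Q *ᵥ x) i)^2) ≤ u * Real.sqrt k})
            = Set.univ ×ˢ {y | Real.sqrt (ζ y) ≤ u * Real.sqrt k} := by
          ext p
          simp only [Set.mem_preimage, Set.mem_setOf_eq, hesymm, Set.mem_prod,
            Set.mem_univ, true_and, hz p.1 p.2, hζdef]
        rw [hset, Measure.prod_prod, measure_univ, one_mul]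
      -- analytic bound on (M*u)^k
      have hE : u ≤ T * Real.exp (-(r^2/(2*(t^2*(d:ℝ))))) := by
        by_cases hcase : t^2*d - r^2 ≤ 0
        · have hu0 : u = 0 := by
            rw [hu]
            apply Real.sqrt_eq_zero_of_nonpos
            apply div_nonpos_of_nonpos_of_nonneg hcase hkpos.le
          rw [hu0]
          positivity
        · push_neg at hcase
          have hx := Real.add_one_le_exp (-(r^2/(t^2*(d:ℝ))))
          have hmul : t^2*(d:ℝ) * (-(r^2/(t^2*(d:ℝ))) + 1)
              ≤ t^2*(d:ℝ) * Real.exp (-(r^2/(t^2*(d:ℝ)))) :=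
            mul_le_mul_of_nonneg_left hx htd.le
          have hcancel : t^2*(d:ℝ) * (-(r^2/(t^2*(d:ℝ))) + 1) = t^2*d - r^2 := by
            field_simp
            ring
          have h1x : t^2*d - r^2 ≤ t^2*(d:ℝ) * Real.exp (-(r^2/(t^2*(d:ℝ)))) := by
            rw [← hcancel]; exact hmul
          have hexp2 : Real.exp (-(r^2/(2*(t^2*(d:ℝ)))))^2 = Real.exp (-(r^2/(t^2*(d:ℝ)))) := by
            rw [sq, ← Real.exp_add]
            congr 1
            field_simp
            ring
          have hTE2 : (T * Real.exp (-(r^2/(2*(t^2*(d:ℝ))))))^2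
              = t^2*((d:ℝ)/k) * Real.exp (-(r^2/(t^2*(d:ℝ)))) := by
            rw [mul_pow, hexp2, hTdef, mul_pow, hαdef, Real.sq_sqrt (by positivity)]
          have hu2le : (t^2*d - r^2)/k ≤ (T * Real.exp (-(r^2/(2*(t^2*(d:ℝ))))))^2 := by
            rw [hTE2]
            rw [div_le_iff₀ hkpos]
            calc t^2*d - r^2 ≤ t^2*(d:ℝ) * Real.exp (-(r^2/(t^2*(d:ℝ)))) := h1x
              _ = t^2*((d:ℝ)/k) * Real.exp (-(r^2/(t^2*(d:ℝ)))) * k := by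
                  field_simp
          have hTEnn : 0 ≤ T * Real.exp (-(r^2/(2*(t^2*(d:ℝ))))) := by positivity
          calc u ≤ Real.sqrt ((T * Real.exp (-(r^2/(2*(t^2*(d:ℝ))))))^2) :=
                Real.sqrt_le_sqrt hu2le
            _ = T * Real.exp (-(r^2/(2*(t^2*(d:ℝ))))) := Real.sqrt_sq hTEnn
      have hfinal : (M*u)^k ≤ Cst * Real.exp (-b * r^2) := by
        have hMu : M * u ≤ (M*T) * Real.exp (-(r^2/(2*(t^2*(d:ℝ))))) := by
          rw [mul_assoc]
          exact mul_le_mul_of_nonneg_left hE hMpos.le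
        have h1 : (M*u)^k ≤ ((M*T) * Real.exp (-(r^2/(2*(t^2*(d:ℝ))))))^k :=
          pow_le_pow_left₀ (by positivity) hMu k
        have h2 : ((M*T) * Real.exp (-(r^2/(2*(t^2*(d:ℝ))))))^k
            = Cst * Real.exp (-(r^2/(2*(t^2*(d:ℝ)))))^k := by
          rw [mul_pow, hCdef]
        have h3 : Real.exp (-(r^2/(2*(t^2*(d:ℝ)))))^k = Real.exp (-b * r^2) := by
          rw [← Real.exp_nat_mul]
          congr 1
          rw [hbdef]
          field_simp
        rw [h2, h3] at h1
        exact h1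
      calc ν {y | r < h y}
          ≤ ν {y | Real.sqrt (ζ y) ≤ u * Real.sqrt k} := measure_mono hsub2
        _ = Measure.pi μ {x | Real.sqrt (∑ i, ((Q *ᵥ x) i)^2) ≤ u * Real.sqrt k} := hid
        _ ≤ ENNReal.ofReal ((M * u) ^ k) := by
            have := hhyp u hunn
            rw [hkR] at this
            exact this
        _ ≤ ENNReal.ofReal (Cst * Real.exp (-b * r^2)) := ENNReal.ofReal_le_ofReal hfinal
    -- layer cake and the Gaussian integral
    have hlayer : ∫⁻ y, ENNReal.ofReal (h y) ∂ν = ∫⁻ r in Set.Ioi 0, ν {y | r < h y} :=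
      lintegral_eq_lintegral_meas_lt ν (Filter.Eventually.of_forall hhnn) hhmeas.aemeasurable
    have hgauss : ∫⁻ r in Set.Ioi 0, ν {y | r < h y}
        ≤ ENNReal.ofReal (Cst * (Real.sqrt (Real.pi / b) / 2)) := by
      have hint : IntegrableOn (fun r : ℝ => Cst * Real.exp (-b * r^2)) (Set.Ioi 0) := by
        exact (integrableOn_Ioi_exp_neg_mul_sq_iff.mpr hbpos).const_mul Cst
      calc ∫⁻ r in Set.Ioi 0, ν {y | r < h y}
          ≤ ∫⁻ r in Set.Ioi 0, ENNReal.ofReal (Cst * Real.exp (-b * r^2)) :=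
            lintegral_mono_ae ((ae_restrict_iff' measurableSet_Ioi).mpr
              (Filter.Eventually.of_forall hbound))
        _ = ENNReal.ofReal (∫ r in Set.Ioi 0, Cst * Real.exp (-b * r^2)) :=
            (ofReal_integral_eq_lintegral_ofReal hint
              (Filter.Eventually.of_forall fun r => by positivity)).symm
        _ = ENNReal.ofReal (Cst * (Real.sqrt (Real.pi / b) / 2)) := by
            rw [MeasureTheory.integral_const_mul, integral_gaussian_Ioi]
    -- numerics
    have hβ : (d:ℝ)/k = 1 + 1/k := by
      rw [hdk]; push_cast; field_simp
    have hβ2 : (d:ℝ)/k ≤ 2 := by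
      rw [hβ]
      have h1k : (1:ℝ)/k ≤ 1 := by
        rw [div_le_one hkpos]; exact_mod_cast hk1
      linarith
    have hαk : α^k ≤ 2 := by
      have hβnn : (0:ℝ) ≤ (d:ℝ)/k := by positivity
      have hsq : (α^k)^2 = ((d:ℝ)/k)^k := by
        rw [← pow_mul, mul_comm k 2, pow_mul, hαdef, Real.sq_sqrt hβnn]
      have hek : ((d:ℝ)/k)^k ≤ 3 := by
        have h1 : (d:ℝ)/k ≤ Real.exp (1/(k:ℝ)) := by
          rw [hβ]
          have := Real.add_one_le_exp (1/(k:ℝ))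
          linarith
        have h2 : ((d:ℝ)/k)^k ≤ Real.exp (1/(k:ℝ))^k := pow_le_pow_left₀ hβnn h1 k
        have h3 : Real.exp (1/(k:ℝ))^k = Real.exp 1 := by
          rw [← Real.exp_nat_mul]
          congr 1
          field_simp
        rw [h3] at h2
        exact h2.trans (le_of_lt (lt_of_lt_of_le Real.exp_one_lt_d9 (by norm_num)))
      have hαknn : 0 ≤ α^k := pow_nonneg hαnn k
      nlinarith
    have hGb : Real.sqrt (Real.pi / b) / 2 ≤ 2*t := by
      have hpib : Real.pi / b = 2*Real.pi*t^2*((d:ℝ)/k) := by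
        rw [hbdef]; field_simp
      have h16 : Real.pi / b ≤ 16 * t^2 := by
        rw [hpib]
        have hpi4 : Real.pi ≤ 4 := Real.pi_le_four
        have hβnn : (0:ℝ) ≤ (d:ℝ)/k := by positivity
        have hπβ : Real.pi * ((d:ℝ)/k) ≤ 8 := by nlinarith [Real.pi_pos]
        nlinarith [mul_nonneg (sub_nonneg.mpr hπβ) (sq_nonneg t)]
      have h4t : Real.sqrt (Real.pi/b) ≤ 4*t := by
        have := Real.sqrt_le_sqrt h16
        rwa [show (16:ℝ)*t^2 = (4*t)^2 by ring, Real.sqrt_sq (by linarith)] at this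
      linarith
    have hnum : 4*(Cst*(Real.sqrt (Real.pi / b)/2)) ≤ (M*t)^d := by
      have hMtnn : (0:ℝ) ≤ M*t := by positivity
      have hMtk : (0:ℝ) ≤ (M*t)^k := pow_nonneg hMtnn k
      have hCst : Cst ≤ (M*t)^k * 2 := by
        have hh : Cst = (M*t)^k * α^k := by
          rw [hCdef, hTdef, show M*(t*α) = (M*t)*α by ring, mul_pow]
        rw [hh]
        exact mul_le_mul_of_nonneg_left hαk hMtk
      have hGnn : (0:ℝ) ≤ Real.sqrt (Real.pi / b)/2 := by positivity
      calc 4*(Cst*(Real.sqrt (Real.pi / b)/2)) ≤ 4*(((M*t)^k*2)*(2*t)) := by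
            apply mul_le_mul_of_nonneg_left _ (by norm_num)
            exact mul_le_mul hCst hGb hGnn (by positivity)
        _ = 16 * ((M*t)^k * t) := by ring
        _ ≤ M * ((M*t)^k * t) := mul_le_mul_of_nonneg_right hM (by positivity)
        _ = (M*t)^d := by rw [hdk, pow_succ]; ring
    -- assemble
    refine le_trans step1 ?_
    calc ∫⁻ y, ENNReal.ofReal (4 * h y) ∂ν
        = ENNReal.ofReal 4 * ∫⁻ y, ENNReal.ofReal (h y) ∂ν := by
          rw [← lintegral_const_mul' (ENNReal.ofReal 4) _ ENNReal.ofReal_ne_top]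
          apply lintegral_congr
          intro y
          rw [← ENNReal.ofReal_mul (by norm_num)]
      _ ≤ ENNReal.ofReal 4 * ENNReal.ofReal (Cst * (Real.sqrt (Real.pi / b)/2)) := by
          rw [hlayer]
          exact mul_le_mul_right hgauss _
      _ = ENNReal.ofReal (4 * (Cst * (Real.sqrt (Real.pi / b)/2))) :=
          (ENNReal.ofReal_mul (by norm_num)).symm
      _ ≤ ENNReal.ofReal ((M*t)^d) := ENNReal.ofReal_le_ofReal hnum


set_option maxHeartbeats 1000000 in
/-- Removal of a large `P e_1` (Proposition "Removal of large `Pe_i`"): the inductive step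
for the theorem on densities of projections. -/
theorem removal_of_large_Pe1 :
    ∃ C₀ : ℝ, 0 < C₀ ∧
      ∀ (n d : ℕ) (hn : 0 < n) (Ω : Type) (_ : MeasureSpace Ω)
        (_ : IsProbabilityMeasure (ℙ : Measure Ω))
        (X : Fin n → Ω → ℝ),
        (∀ i, Measurable (X i)) →
        iIndepFun X ℙ →
        -- the coordinates have densities bounded by `1`
        (∀ i, Measure.map (X i) ℙ ≤ volume) →
        ∀ P Q : Matrix (Fin n) (Fin n) ℝ,
          -- `P` is the orthogonal projection onto a `d`-dimensional subspace
          Pᵀ = P → P * P = P → P.rank = d →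
          -- `‖P e₁‖₂ ≥ 1/2`
          1 / 2 ≤ eNormR (P *ᵥ Pi.single (⟨0, hn⟩ : Fin n) 1) →
          -- `Q` is the orthogonal projection with `ker Q = span (ker P, P e₁)`
          Qᵀ = Q → Q * Q = Q →
          LinearMap.ker Q.mulVecLin =
            LinearMap.ker P.mulVecLin ⊔ Submodule.span ℝ {P *ᵥ Pi.single (⟨0, hn⟩ : Fin n) 1} →
          ∀ M : ℝ, C₀ ≤ M →
          -- hypothesis for `Q X`
          (∀ t : ℝ, 0 ≤ t →
            (ℙ {ω | eNormR (Q *ᵥ (fun i => X i ω)) ≤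
                t * Real.sqrt ((d : ℝ) - 1)}).toReal ≤ (M * t) ^ (d - 1)) →
          -- conclusion for `P X`
          ∀ t : ℝ, 0 ≤ t →
            (ℙ {ω | eNormR (P *ᵥ (fun i => X i ω)) ≤
              t * Real.sqrt d}).toReal ≤ (M * t) ^ d := by
  refine ⟨16, by norm_num, ?_⟩
  intro n d hn Ω _ hPM X hXm hind hdens P Q hPt hPP hrank hnorm hQt hQQ hker M hM hhyp t ht
  by_cases hd0 : d = 0
  · subst hd0
    simp only [pow_zero]
    refine ENNReal.toReal_le_of_le_ofReal zero_le_one ?_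
    rw [ENNReal.ofReal_one]
    exact prob_le_one
  have hd1 : 1 ≤ d := Nat.one_le_iff_ne_zero.mpr hd0
  obtain ⟨m, rfl⟩ : ∃ m, n = m + 1 := ⟨n - 1, (Nat.succ_pred_eq_of_pos hn).symm⟩
  have hi0 : (⟨0, hn⟩ : Fin (m+1)) = 0 := by simp
  rw [hi0] at hnorm hker
  set w := P *ᵥ Pi.single (0 : Fin (m+1)) 1 with hwdef
  set σ := ∑ i, (w i)^2 with hσdef
  have hσnn : 0 ≤ σ := Finset.sum_nonneg fun i _ => sq_nonneg _
  have hnorm' : 1/2 ≤ Real.sqrt σ := by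
    unfold eNormR at hnorm
    exact hnorm
  have hσpos : 0 < σ := by
    rcases eq_or_lt_of_le hσnn with h0 | h
    · exfalso
      rw [← h0, Real.sqrt_zero] at hnorm'
      norm_num at hnorm'
    · exact h
  have hvec := projDecomp P Q 0 hPt hPP hQt hQQ hker hσpos.ne'
  have hPw : P *ᵥ w = w := by
    rw [hwdef, Matrix.mulVec_mulVec, hPP]
  have hkerPQ : ∀ v, P *ᵥ v = 0 → Q *ᵥ v = 0 := by
    intro v hv
    have h1 : v ∈ LinearMap.ker P.mulVecLin := by simpa [LinearMap.mem_ker] using hv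
    have h2 : v ∈ LinearMap.ker Q.mulVecLin := by
      rw [hker]; exact Submodule.mem_sup_left h1
    simpa [LinearMap.mem_ker] using h2
  have hQw : Q *ᵥ w = 0 := by
    have : w ∈ LinearMap.ker Q.mulVecLin := by
      rw [hker]
      exact Submodule.mem_sup_right (Submodule.mem_span_singleton_self w)
    simpa [LinearMap.mem_ker] using this
  have hQe : Q *ᵥ Pi.single (0 : Fin (m+1)) 1 = 0 := by
    have h1 : P *ᵥ (Pi.single (0 : Fin (m+1)) 1 - w) = 0 := by
      rw [Matrix.mulVec_sub, hPw, hwdef, sub_self]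
    have h2 := hkerPQ _ h1
    rw [Matrix.mulVec_sub, sub_eq_zero] at h2
    rw [h2, hQw]
  have hsumdot : ∀ v : Fin (m+1) → ℝ, v ⬝ᵥ v = ∑ i, (v i)^2 := by
    intro v; simp [dotProduct, sq]
  have hquad : ∀ x, ∑ i, ((P *ᵥ x) i)^2 = ∑ i, ((Q *ᵥ x) i)^2 + σ⁻¹ * (w ⬝ᵥ x)^2 := by
    intro x
    have e1 : (P *ᵥ x) ⬝ᵥ (P *ᵥ x) = x ⬝ᵥ (P *ᵥ x) := by
      rw [dot_mulVec_symm P hPt x (P *ᵥ x), Matrix.mulVec_mulVec, hPP]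
    have e2 : (Q *ᵥ x) ⬝ᵥ (Q *ᵥ x) = x ⬝ᵥ (Q *ᵥ x) := by
      rw [dot_mulVec_symm Q hQt x (Q *ᵥ x), Matrix.mulVec_mulVec, hQQ]
    calc ∑ i, ((P *ᵥ x) i)^2 = (P *ᵥ x) ⬝ᵥ (P *ᵥ x) := (hsumdot _).symm
      _ = x ⬝ᵥ (P *ᵥ x) := e1
      _ = x ⬝ᵥ (Q *ᵥ x + (σ⁻¹ * (w ⬝ᵥ x)) • w) := by rw [← hvec x]
      _ = x ⬝ᵥ (Q *ᵥ x) + (σ⁻¹ * (w ⬝ᵥ x)) * (x ⬝ᵥ w) := by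
          rw [dotProduct_add, dotProduct_smul, smul_eq_mul]
      _ = (Q *ᵥ x) ⬝ᵥ (Q *ᵥ x) + σ⁻¹ * (w ⬝ᵥ x)^2 := by
          rw [e2, dotProduct_comm x w]; ring
      _ = ∑ i, ((Q *ᵥ x) i)^2 + σ⁻¹ * (w ⬝ᵥ x)^2 := by rw [hsumdot]
  have hw0 : w 0 = σ := by
    calc w 0 = Pi.single (0 : Fin (m+1)) 1 ⬝ᵥ w := by
          rw [single_dotProduct, one_mul]
      _ = Pi.single (0 : Fin (m+1)) 1 ⬝ᵥ (P *ᵥ w) := by rw [hPw]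
      _ = (P *ᵥ Pi.single (0 : Fin (m+1)) 1) ⬝ᵥ w :=
          (dot_mulVec_symm P hPt (Pi.single 0 1) w).symm
      _ = w ⬝ᵥ w := by rw [← hwdef]
      _ = σ := by rw [hsumdot, hσdef]
  -- the measures
  set μ : Fin (m+1) → Measure ℝ := fun i => Measure.map (X i) ℙ with hμdef
  haveI hinst : ∀ i, IsProbabilityMeasure (μ i) :=
    fun i => Measure.isProbabilityMeasure_map (hXm i).aemeasurable
  have hμle : ∀ i, μ i ≤ volume := hdens
  have hT : Measurable (fun ω i => X i ω) := measurable_pi_iff.mpr hXm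
  have hmap : Measure.map (fun ω i => X i ω) ℙ = Measure.pi μ :=
    joint_law_eq_pi X hXm hind
  have hQmeas : Measurable (fun x : Fin (m+1) → ℝ => ∑ i, ((Q *ᵥ x) i)^2) := by
    simp only [Matrix.mulVec, dotProduct]
    exact Finset.measurable_sum _ fun i _ =>
      (Finset.measurable_sum _ fun j _ =>
        (measurable_pi_apply j).const_mul _).pow_const 2
  have hPmeas : Measurable (fun x : Fin (m+1) → ℝ => ∑ i, ((P *ᵥ x) i)^2) := by
    simp only [Matrix.mulVec, dotProduct]
    exact Finset.measurable_sum _ fun i _ =>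
      (Finset.measurable_sum _ fun j _ =>
        (measurable_pi_apply j).const_mul _).pow_const 2
  -- transfer of the hypothesis
  have hcore_hyp : ∀ u : ℝ, 0 ≤ u →
      Measure.pi μ {x | Real.sqrt (∑ i, ((Q *ᵥ x) i)^2) ≤ u * Real.sqrt ((d:ℝ) - 1)}
        ≤ ENNReal.ofReal ((M * u) ^ (d - 1)) := by
    intro u hu
    have hBmeas : MeasurableSet {x : Fin (m+1) → ℝ |
        Real.sqrt (∑ i, ((Q *ᵥ x) i)^2) ≤ u * Real.sqrt ((d:ℝ) - 1)} :=
      measurableSet_le hQmeas.sqrt measurable_const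
    have heq : Measure.pi μ {x | Real.sqrt (∑ i, ((Q *ᵥ x) i)^2) ≤ u * Real.sqrt ((d:ℝ) - 1)}
        = ℙ {ω | eNormR (Q *ᵥ (fun i => X i ω)) ≤ u * Real.sqrt ((d:ℝ) - 1)} := by
      rw [← hmap, Measure.map_apply hT hBmeas]
      rfl
    rw [heq]
    refine (ENNReal.le_ofReal_iff_toReal_le (measure_ne_top _ _) (by positivity)).mpr ?_
    exact hhyp u hu
  have hM16 : (16:ℝ) ≤ M := hM
  have hfin := core_estimate μ hμle P Q w σ hσdef hσpos hw0 hnorm' hQe hquad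
    d hd1 M hM16 hcore_hyp t ht
  -- transfer of the conclusion
  have hAmeas : MeasurableSet {x : Fin (m+1) → ℝ | ∑ i, ((P *ᵥ x) i)^2 ≤ t^2 * d} :=
    measurableSet_le hPmeas measurable_const
  have hset : {ω | eNormR (P *ᵥ (fun i => X i ω)) ≤ t * Real.sqrt d}
      = (fun ω i => X i ω) ⁻¹' {x | ∑ i, ((P *ᵥ x) i)^2 ≤ t^2 * d} := by
    ext ω
    simp only [Set.mem_setOf_eq, Set.mem_preimage]
    unfold eNormR
    rw [Real.sqrt_le_iff]
    have hB : (0:ℝ) ≤ t * Real.sqrt d := mul_nonneg ht (Real.sqrt_nonneg _)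
    have hB2 : (t * Real.sqrt d)^2 = t^2 * d := by
      rw [mul_pow, Real.sq_sqrt (Nat.cast_nonneg d)]
    constructor
    · rintro ⟨-, h2⟩
      rwa [hB2] at h2
    · intro h1
      exact ⟨hB, by rwa [hB2]⟩
  rw [hset]
  have : ℙ ((fun ω i => X i ω) ⁻¹' {x | ∑ i, ((P *ᵥ x) i)^2 ≤ t^2 * d})
      = Measure.pi μ {x | ∑ i, ((P *ᵥ x) i)^2 ≤ t^2 * d} := by
    rw [← hmap, Measure.map_apply hT hAmeas]
  rw [this]
  exact ENNReal.toReal_le_of_le_ofReal (by positivity) hfin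
end

section
/- There is an absolute constant M₀ with the following property. Let Z₁, Z₂ ≥ 0 be random variables on a common probability space and let d > 1 and M ≥ M₀ be real numbers. Assume: (1) for every t ≥ 0, the conditional probability P(Z₁ ≤ t | Z₂) ≤ 2t almost surely; and (2) P(Z₂ ≤ t√(d−1)) ≤ (Mt)^{d−1} for all t ≥ 0. Then P( √(Z₁² + Z₂²) ≤ t√d ) ≤ (Mt)^d for all t ≥ 0. -/
open MeasureTheory ProbabilityTheory
open Finset

lemma tensorization_key {Ω : Type} [MeasureSpace Ω] [IsProbabilityMeasure (ℙ : Measure Ω)]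
    {Z₁ Z₂ : Ω → ℝ} (hZ₁ : Measurable Z₁) (hZ₂ : Measurable Z₂)
    {s : ℝ}
    (hcond : ∀ᵐ ω ∂ℙ,
      (ℙ[Set.indicator {ω' | Z₁ ω' ≤ s} (fun _ => (1 : ℝ)) |
        MeasurableSpace.comap Z₂ Real.measurableSpace]) ω ≤ 2 * s)
    {B : Set ℝ} (hB : MeasurableSet B) :
    (ℙ ({ω | Z₁ ω ≤ s} ∩ Z₂ ⁻¹' B)).toReal ≤ 2 * s * (ℙ (Z₂ ⁻¹' B)).toReal := by
  have hm : MeasurableSpace.comap Z₂ Real.measurableSpace ≤ _ := hZ₂.comap_le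
  have hAm : MeasurableSet[MeasurableSpace.comap Z₂ Real.measurableSpace] (Z₂ ⁻¹' B) :=
    ⟨B, hB, rfl⟩
  have hS : MeasurableSet {ω | Z₁ ω ≤ s} := hZ₁ measurableSet_Iic
  have hint : Integrable (Set.indicator {ω | Z₁ ω ≤ s} fun _ => (1:ℝ)) ℙ :=
    (integrable_const 1).indicator hS
  have h1 : (ℙ ({ω | Z₁ ω ≤ s} ∩ Z₂ ⁻¹' B)).toReal
      = ∫ ω in Z₂ ⁻¹' B, Set.indicator {ω | Z₁ ω ≤ s} (fun _ => (1:ℝ)) ω ∂ℙ := by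
    rw [setIntegral_indicator hS]
    simp [Set.inter_comm]; rfl
  rw [h1, ← setIntegral_condExp hm hint hAm]
  calc ∫ ω in Z₂ ⁻¹' B,
        (ℙ[Set.indicator {ω | Z₁ ω ≤ s} fun _ => (1:ℝ)|MeasurableSpace.comap Z₂ Real.measurableSpace]) ω ∂ℙ
      ≤ ∫ _ω in Z₂ ⁻¹' B, 2 * s ∂ℙ := by
        exact setIntegral_mono_ae integrable_condExp.integrableOn
          ((integrableOn_const_iff enorm_ne_top).mpr (Or.inr (measure_lt_top _ _))) hcond
    _ = 2 * s * (ℙ (Z₂ ⁻¹' B)).toReal := by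
        rw [setIntegral_const, smul_eq_mul, Measure.real]; ring

lemma tensorization_abel (F : ℕ → ℝ) (n : ℕ) :
    ∑ j ∈ range n, ((j:ℝ)+1) * (F j - F (j+1))
      = (∑ j ∈ range n, F j) - n * F n := by
  induction n with
  | zero => simp
  | succ n ih =>
    rw [Finset.sum_range_succ, ih, Finset.sum_range_succ]
    push_cast
    ring

lemma tensorization_geom (n : ℕ) : ∑ j ∈ range n, (9/10:ℝ)^j ≤ 10 := by
  rw [geom_sum_eq (by norm_num : (9/10:ℝ) ≠ 1)]
  have h : (0:ℝ) ≤ (9/10:ℝ)^n := by positivity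
  have h1 : (9/10:ℝ)^n ≤ 1 := pow_le_one₀ (by norm_num) (by norm_num)
  rw [div_le_iff_of_neg (by norm_num : (9/10:ℝ) - 1 < 0)]
  nlinarith


set_option maxHeartbeats 1600000 in
/-- Tensorization lemma (Lemma "Tensorization"): combining a conditional small ball bound
for `Z₁` with a small ball bound for `Z₂`. -/
theorem tensorization_lemma :
    ∃ M₀ : ℝ, 0 < M₀ ∧
      ∀ (Ω : Type) (_ : MeasureSpace Ω) (_ : IsProbabilityMeasure (ℙ : Measure Ω))
        (Z₁ Z₂ : Ω → ℝ), Measurable Z₁ → Measurable Z₂ →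
        (∀ ω, 0 ≤ Z₁ ω) → (∀ ω, 0 ≤ Z₂ ω) →
        ∀ (d M : ℝ), 1 < d → M₀ ≤ M →
        -- (1) conditional small ball bound for `Z₁` given `Z₂`
        (∀ t : ℝ, 0 ≤ t →
          ∀ᵐ ω ∂ℙ,
            (ℙ[Set.indicator {ω' | Z₁ ω' ≤ t} (fun _ => (1 : ℝ)) |
              MeasurableSpace.comap Z₂ Real.measurableSpace]) ω ≤ 2 * t) →
        -- (2) small ball bound for `Z₂`
        (∀ t : ℝ, 0 ≤ t →
          (ℙ {ω | Z₂ ω ≤ t * Real.sqrt (d - 1)}).toReal ≤ (M * t) ^ (d - 1)) →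
        -- conclusion
        ∀ t : ℝ, 0 ≤ t →
          (ℙ {ω | Real.sqrt ((Z₁ ω) ^ 2 + (Z₂ ω) ^ 2) ≤ t * Real.sqrt d}).toReal ≤
            (M * t) ^ d := by
  classical
  refine ⟨100, by norm_num, ?_⟩
  intro Ω _ _ Z₁ Z₂ hZ₁ hZ₂ hZ₁0 hZ₂0 d M hd hM hcond h2 t ht
  have hp0 : (0:ℝ) < d - 1 := by linarith
  have hd0 : (0:ℝ) < d := by linarith
  have hM0 : (0:ℝ) < M := by linarith
  set p : ℝ := d - 1 with hp
  have hdp1 : d = p + 1 := by rw [hp]; ring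
  set n : ℕ := ⌈Real.sqrt p⌉₊ with hn
  have hn0 : 0 < n := Nat.ceil_pos.mpr (Real.sqrt_pos.mpr hp0)
  have hnR : (0:ℝ) < (n:ℝ) := by exact_mod_cast hn0
  have hsp : Real.sqrt p ≤ (n:ℝ) := Nat.le_ceil _
  have hpn : p ≤ (n:ℝ)^2 := by
    nlinarith [Real.sq_sqrt hp0.le, Real.sqrt_nonneg p]
  set a : ℕ → ℝ := fun j => t * Real.sqrt (d - d * ((j:ℝ)/(n:ℝ))^2) with ha
  set h : ℕ → ℝ := fun j => t * Real.sqrt d * ((j:ℝ)/(n:ℝ)) with hh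
  set F : ℕ → ℝ := fun j => (ℙ {ω | Z₂ ω ≤ a j}).toReal with hF
  have ha0 : ∀ j, 0 ≤ a j := fun j => mul_nonneg ht (Real.sqrt_nonneg _)
  have hh0 : ∀ j : ℕ, 0 ≤ h j := fun j => by
    simp only [hh]
    exact mul_nonneg (mul_nonneg ht (Real.sqrt_nonneg _)) (by positivity)
  have hF0 : ∀ j, 0 ≤ F j := fun j => ENNReal.toReal_nonneg
  have hamono : ∀ j : ℕ, a (j+1) ≤ a j := by
    intro j
    simp only [ha]
    apply mul_le_mul_of_nonneg_left _ ht
    apply Real.sqrt_le_sqrt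
    have h1 : ((j:ℝ)/(n:ℝ))^2 ≤ (((j:ℝ)+1)/(n:ℝ))^2 := by
      apply pow_le_pow_left₀ (by positivity)
      exact (div_le_div_iff_of_pos_right hnR).mpr (by linarith)
    push_cast
    nlinarith [mul_le_mul_of_nonneg_left h1 hd0.le]
  have hinner : ∀ j : ℕ, j ≤ n → 0 ≤ d - d * ((j:ℝ)/(n:ℝ))^2 := by
    intro j hj
    have h1 : (j:ℝ)/(n:ℝ) ≤ 1 := by
      rw [div_le_one hnR]; exact_mod_cast hj
    have h0 : (0:ℝ) ≤ (j:ℝ)/(n:ℝ) := by positivity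
    have hsq : ((j:ℝ)/(n:ℝ))^2 ≤ 1 := by nlinarith
    nlinarith [mul_le_mul_of_nonneg_left hsq hd0.le]
  have hSsub : ∀ j : ℕ, {ω | Z₂ ω ≤ a (j+1)} ⊆ {ω | Z₂ ω ≤ a j} :=
    fun j ω hω => le_trans hω (hamono j)
  -- the inclusion
  have hincl : {ω | Real.sqrt ((Z₁ ω) ^ 2 + (Z₂ ω) ^ 2) ≤ t * Real.sqrt d} ⊆
      {ω | Z₂ ω ≤ a n} ∪ ⋃ j ∈ range n,
        ({ω | Z₁ ω ≤ h (j+1)} ∩ ({ω | Z₂ ω ≤ a j} \ {ω | Z₂ ω ≤ a (j+1)})) := by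
    intro ω hω
    simp only [Set.mem_setOf_eq] at hω
    have hsum : (Z₁ ω)^2 + (Z₂ ω)^2 ≤ t^2 * d := by
      have h1 : t * Real.sqrt d = Real.sqrt (t^2 * d) := by
        rw [Real.sqrt_mul (sq_nonneg t), Real.sqrt_sq ht]
      rw [h1] at hω
      exact (Real.sqrt_le_sqrt_iff (by positivity)).mp hω
    by_cases hcase : Z₂ ω ≤ a n
    · exact Or.inl hcase
    · have h0 : Z₂ ω ≤ a 0 := by
        have h1 : Z₂ ω ≤ Real.sqrt (t^2*d) := by
          rw [← Real.sqrt_sq (hZ₂0 ω)]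
          exact Real.sqrt_le_sqrt (by nlinarith [sq_nonneg (Z₁ ω)])
        simp only [ha]
        push_cast
        simpa [Real.sqrt_mul (sq_nonneg t), Real.sqrt_sq ht] using h1
      have hex : ∃ k, ¬ Z₂ ω ≤ a k := ⟨n, hcase⟩
      have hk1 : ¬ Z₂ ω ≤ a (Nat.find hex) := Nat.find_spec hex
      have hk0 : 0 < Nat.find hex := by
        rcases Nat.eq_zero_or_pos (Nat.find hex) with h0' | h'
        · exact absurd (h0' ▸ hk1) (by simpa using h0)
        · exact h'
      have hkn : Nat.find hex ≤ n := Nat.find_le hcase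
      obtain ⟨j, hj⟩ : ∃ j, Nat.find hex = j + 1 :=
        ⟨Nat.find hex - 1, (Nat.succ_pred_eq_of_pos hk0).symm⟩
      have hjn : j < n := by omega
      have hQj : Z₂ ω ≤ a j := by
        have := Nat.find_min hex (m := j) (by omega)
        exact not_not.mp this
      have hQj1 : ¬ Z₂ ω ≤ a (j+1) := hj ▸ hk1
      have hZ₂gt : a (j+1) < Z₂ ω := not_le.mp hQj1
      have hin : 0 ≤ d - d * ((((j:ℕ)+1 : ℕ):ℝ)/(n:ℝ))^2 := hinner (j+1) (by omega)
      have haj : (a (j+1))^2 = t^2 * (d - d * ((((j:ℕ)+1 : ℕ):ℝ)/(n:ℝ))^2) := by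
        simp only [ha]
        rw [mul_pow, Real.sq_sqrt hin]
      have hZ1 : Z₁ ω ≤ h (j+1) := by
        have hsq2 : (a (j+1))^2 ≤ (Z₂ ω)^2 := by
          have := ha0 (j+1)
          nlinarith
        have hhsq : (h (j+1))^2 = t^2 * d * ((((j:ℕ)+1 : ℕ):ℝ)/(n:ℝ))^2 := by
          simp only [hh]
          rw [mul_pow, mul_pow, Real.sq_sqrt hd0.le]
        have hZ1sq : (Z₁ ω)^2 ≤ (h (j+1))^2 := by
          rw [hhsq]
          nlinarith [haj, hsq2, hsum]
        have := Real.sqrt_le_sqrt hZ1sq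
        rwa [Real.sqrt_sq (hZ₁0 ω), Real.sqrt_sq (hh0 (j+1))] at this
      refine Or.inr ?_
      refine Set.mem_biUnion (Finset.mem_range.mpr hjn) ?_
      exact ⟨hZ1, hQj, hQj1⟩
  -- measure inequality
  have hmeas : (ℙ {ω | Real.sqrt ((Z₁ ω) ^ 2 + (Z₂ ω) ^ 2) ≤ t * Real.sqrt d}).toReal ≤
      F n + ∑ j ∈ range n,
        (ℙ ({ω | Z₁ ω ≤ h (j+1)} ∩ ({ω | Z₂ ω ≤ a j} \ {ω | Z₂ ω ≤ a (j+1)}))).toReal := by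
    have h1 : ℙ {ω | Real.sqrt ((Z₁ ω) ^ 2 + (Z₂ ω) ^ 2) ≤ t * Real.sqrt d} ≤
        ℙ {ω | Z₂ ω ≤ a n} + ∑ j ∈ range n,
          ℙ ({ω | Z₁ ω ≤ h (j+1)} ∩ ({ω | Z₂ ω ≤ a j} \ {ω | Z₂ ω ≤ a (j+1)})) := by
      refine le_trans (measure_mono hincl) ?_
      refine le_trans (measure_union_le _ _) ?_
      exact add_le_add_right (measure_biUnion_finset_le _ _) _
    have h2' := ENNReal.toReal_mono (ENNReal.add_ne_top.mpr ⟨measure_ne_top _ _,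
        ENNReal.sum_ne_top.mpr (fun j _ => measure_ne_top _ _)⟩) h1
    refine le_trans h2' ?_
    rw [ENNReal.toReal_add (measure_ne_top _ _)
        (ENNReal.sum_ne_top.mpr (fun j _ => measure_ne_top _ _)),
      ENNReal.toReal_sum (fun j _ => measure_ne_top _ _)]
  -- F n ≤ 0
  have hFn : F n ≤ 0 := by
    have han : a n = 0 := by
      simp only [ha]
      rw [div_self (ne_of_gt hnR)]
      simp
    have h2' := h2 0 le_rfl
    simp only [hF]
    rw [han]
    calc (ℙ {ω | Z₂ ω ≤ (0:ℝ)}).toReal ≤ (M*0)^p := by simpa using h2'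
      _ = 0 := by rw [mul_zero, Real.zero_rpow (ne_of_gt hp0)]
  -- difference of measures
  have hPdiff : ∀ j : ℕ,
      (ℙ ({ω | Z₂ ω ≤ a j} \ {ω | Z₂ ω ≤ a (j+1)})).toReal = F j - F (j+1) := by
    intro j
    rw [measure_diff (hSsub j) ((hZ₂ measurableSet_Iic).nullMeasurableSet) (measure_ne_top _ _),
      ENNReal.toReal_sub_of_le (measure_mono (hSsub j)) (measure_ne_top _ _)]
  have hterm : ∀ j ∈ range n,
      (ℙ ({ω | Z₁ ω ≤ h (j+1)} ∩ ({ω | Z₂ ω ≤ a j} \ {ω | Z₂ ω ≤ a (j+1)}))).toReal ≤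
        2 * h (j+1) * (F j - F (j+1)) := by
    intro j _
    have hkey := tensorization_key hZ₁ hZ₂ (hcond (h (j+1)) (hh0 (j+1)))
      (B := Set.Iic (a j) \ Set.Iic (a (j+1))) (measurableSet_Iic.diff measurableSet_Iic)
    have hBeq : Z₂ ⁻¹' (Set.Iic (a j) \ Set.Iic (a (j+1)))
        = {ω | Z₂ ω ≤ a j} \ {ω | Z₂ ω ≤ a (j+1)} := rfl
    rw [hBeq] at hkey
    rw [← hPdiff j]
    exact hkey
  -- Abel summation
  have habel : ∑ j ∈ range n, 2 * h (j+1) * (F j - F (j+1)) ≤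
      2 * (t * Real.sqrt d / n) * ∑ j ∈ range n, F j := by
    have hhj : ∀ j : ℕ, h (j+1) = (t * Real.sqrt d / n) * ((j:ℝ)+1) := by
      intro j
      simp only [hh]
      push_cast
      ring
    have heq : ∑ j ∈ range n, 2 * h (j+1) * (F j - F (j+1))
        = 2 * (t * Real.sqrt d / n) * ∑ j ∈ range n, ((j:ℝ)+1) * (F j - F (j+1)) := by
      rw [Finset.mul_sum]
      refine Finset.sum_congr rfl (fun j _ => ?_)
      rw [hhj j]; ring
    rw [heq, tensorization_abel]
    have hw : 0 ≤ 2 * (t * Real.sqrt d / n) := by positivity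
    have hs : (∑ j ∈ range n, F j) - (n:ℝ) * F n ≤ ∑ j ∈ range n, F j := by
      nlinarith [hF0 n, hnR]
    nlinarith
  -- bound on F j
  have hFj : ∀ j ∈ range n, F j ≤
      (M*t)^p * (Real.exp (1/2) * Real.exp (-(p*((j:ℝ)/(n:ℝ))^2)/2)) := by
    intro j hj
    have hjn : j < n := Finset.mem_range.mp hj
    have hu1 : ((j:ℝ)/(n:ℝ)) ≤ 1 := by
      rw [div_le_one hnR]; exact_mod_cast hjn.le
    have hu0 : (0:ℝ) ≤ (j:ℝ)/(n:ℝ) := by positivity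
    have hsp0 : 0 < Real.sqrt p := Real.sqrt_pos.mpr hp0
    have h2' := h2 (a j / Real.sqrt p) (div_nonneg (ha0 j) hsp0.le)
    rw [show a j / Real.sqrt p * Real.sqrt p = a j from
      div_mul_cancel₀ _ (ne_of_gt hsp0)] at h2'
    refine le_trans h2' ?_
    have hexp2 : ∀ y : ℝ, (Real.exp y)^2 = Real.exp (2*y) := fun y => by
      rw [pow_two, ← Real.exp_add]; ring_nf
    have hbase : M * (a j / Real.sqrt p)
        ≤ M * t * (Real.exp (1/(2*p)) * Real.exp (-(((j:ℝ)/(n:ℝ))^2)/2)) := by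
      rw [mul_assoc]
      apply mul_le_mul_of_nonneg_left _ hM0.le
      have hLHS0 : 0 ≤ a j / Real.sqrt p := div_nonneg (ha0 j) hsp0.le
      have hRHS0 : 0 ≤ t * (Real.exp (1/(2*p)) * Real.exp (-(((j:ℝ)/(n:ℝ))^2)/2)) := by
        positivity
      have hsq : (a j / Real.sqrt p)^2
          ≤ (t * (Real.exp (1/(2*p)) * Real.exp (-(((j:ℝ)/(n:ℝ))^2)/2)))^2 := by
        have hL : (a j / Real.sqrt p)^2 = t^2 * ((d - d * ((j:ℝ)/(n:ℝ))^2) / p) := by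
          simp only [ha]
          rw [div_pow, mul_pow, Real.sq_sqrt (hinner j hjn.le), Real.sq_sqrt hp0.le]
          ring
        have hR : (t * (Real.exp (1/(2*p)) * Real.exp (-(((j:ℝ)/(n:ℝ))^2)/2)))^2
            = t^2 * (Real.exp (1/p) * Real.exp (-(((j:ℝ)/(n:ℝ))^2))) := by
          rw [mul_pow, mul_pow, hexp2, hexp2]
          congr 3
          · field_simp
          · ring
        rw [hL, hR]
        apply mul_le_mul_of_nonneg_left _ (sq_nonneg t)
        have e1 : 1/p + 1 ≤ Real.exp (1/p) := Real.add_one_le_exp _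
        have e2 : -(((j:ℝ)/(n:ℝ))^2) + 1 ≤ Real.exp (-(((j:ℝ)/(n:ℝ))^2)) :=
          Real.add_one_le_exp _
        have hu2 : ((j:ℝ)/(n:ℝ))^2 ≤ 1 := by nlinarith
        have hdp : (d - d * ((j:ℝ)/(n:ℝ))^2) / p = (1 + 1/p) * (1 - ((j:ℝ)/(n:ℝ))^2) := by
          rw [hdp1]
          field_simp
        rw [hdp]
        exact mul_le_mul (by linarith) (by linarith) (by linarith) (Real.exp_nonneg _)
      have := Real.sqrt_le_sqrt hsq
      rwa [Real.sqrt_sq hLHS0, Real.sqrt_sq hRHS0] at this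
    calc (M * (a j / Real.sqrt p))^p
        ≤ (M * t * (Real.exp (1/(2*p)) * Real.exp (-(((j:ℝ)/(n:ℝ))^2)/2)))^p :=
          Real.rpow_le_rpow (mul_nonneg hM0.le (div_nonneg (ha0 j) hsp0.le)) hbase hp0.le
      _ = (M*t)^p * (Real.exp (1/2) * Real.exp (-(p*((j:ℝ)/(n:ℝ))^2)/2)) := by
          rw [Real.mul_rpow (by positivity) (by positivity),
            Real.mul_rpow (Real.exp_nonneg _) (Real.exp_nonneg _),
            ← Real.exp_mul, ← Real.exp_mul]
          congr 2
          · field_simp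
          · field_simp
  -- geometric bound
  have hgeom : ∑ j ∈ range n, Real.exp (-(p*((j:ℝ)/(n:ℝ))^2)/2) ≤ 10 := by
    have hterm2 : ∀ j ∈ range n, Real.exp (-(p*((j:ℝ)/(n:ℝ))^2)/2) ≤ (9/10:ℝ)^j := by
      intro j hj
      have hjn : j < n := Finset.mem_range.mp hj
      rcases Nat.lt_or_ge n 2 with hn2 | hn2
      · have hj0 : j = 0 := by omega
        subst hj0
        simp
      · have hn2R : (2:ℝ) ≤ (n:ℝ) := by exact_mod_cast hn2
        have hlt : ((n:ℝ) - 1) < Real.sqrt p := by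
          have h1 := Nat.lt_ceil.mp (show n - 1 < ⌈Real.sqrt p⌉₊ from by omega)
          rwa [Nat.cast_sub hn0, Nat.cast_one] at h1
        have hp1 : ((n:ℝ)-1)^2 ≤ p := by
          nlinarith [Real.sq_sqrt hp0.le, Real.sqrt_nonneg p]
        have halpha : (1/8:ℝ) * (2*(n:ℝ)^2) ≤ p := by nlinarith
        have hj2 : (j:ℝ) ≤ (j:ℝ)^2 := by
          have : j ≤ j^2 := Nat.le_self_pow two_ne_zero j
          exact_mod_cast this
        have hmono2 : Real.exp (-(p*((j:ℝ)/(n:ℝ))^2)/2) ≤ Real.exp (-(1/8)*(j:ℝ)) := by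
          apply Real.exp_le_exp.mpr
          have heq : -(p*((j:ℝ)/(n:ℝ))^2)/2 = -(p/(2*(n:ℝ)^2)*(j:ℝ)^2) := by
            have hne : (n:ℝ) ≠ 0 := ne_of_gt hnR
            field_simp
          rw [heq]
          have h1 : (1/8:ℝ)*(j:ℝ)^2 ≤ p/(2*(n:ℝ)^2)*(j:ℝ)^2 := by
            apply mul_le_mul_of_nonneg_right _ (sq_nonneg _)
            rw [le_div_iff₀ (by positivity)]
            linarith
          nlinarith
        refine le_trans hmono2 ?_
        have hexpj : Real.exp (-(1/8)*(j:ℝ)) = (Real.exp (-(1/8:ℝ)))^j := by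
          rw [← Real.exp_nat_mul]
          congr 1
          ring
        rw [hexpj]
        apply pow_le_pow_left₀ (Real.exp_nonneg _)
        have h18 : (9/8:ℝ) ≤ Real.exp (1/8) := by
          have := Real.add_one_le_exp (1/8:ℝ); linarith
        rw [Real.exp_neg]
        have hpos : (0:ℝ) < Real.exp (1/8) := Real.exp_pos _
        rw [inv_le_comm₀ hpos (by norm_num)]
        norm_num
        linarith
    calc ∑ j ∈ range n, Real.exp (-(p*((j:ℝ)/(n:ℝ))^2)/2)
        ≤ ∑ j ∈ range n, (9/10:ℝ)^j := Finset.sum_le_sum hterm2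
      _ ≤ 10 := tensorization_geom n
  -- sum of F bound
  have hG0 : 0 ≤ (M*t)^p := Real.rpow_nonneg (by positivity) _
  have hsum2 : ∑ j ∈ range n, F j ≤ (M*t)^p * (Real.exp (1/2) * 10) := by
    calc ∑ j ∈ range n, F j
        ≤ ∑ j ∈ range n, (M*t)^p * (Real.exp (1/2) * Real.exp (-(p*((j:ℝ)/(n:ℝ))^2)/2)) :=
          Finset.sum_le_sum hFj
      _ = (M*t)^p * Real.exp (1/2) * ∑ j ∈ range n, Real.exp (-(p*((j:ℝ)/(n:ℝ))^2)/2) := by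
          rw [Finset.mul_sum]
          refine Finset.sum_congr rfl fun j _ => by ring
      _ ≤ (M*t)^p * Real.exp (1/2) * 10 := by
          apply mul_le_mul_of_nonneg_left hgeom (by positivity)
      _ = (M*t)^p * (Real.exp (1/2) * 10) := by ring
  -- √d ≤ √2 * n
  have hsd : Real.sqrt d ≤ Real.sqrt 2 * n := by
    have hone : (1:ℝ) ≤ (n:ℝ) := by exact_mod_cast hn0
    have hd2 : d ≤ 2 * (n:ℝ)^2 := by
      rcases le_or_gt d 2 with hc | hc
      · nlinarith
      · nlinarith
    calc Real.sqrt d ≤ Real.sqrt (2*(n:ℝ)^2) := Real.sqrt_le_sqrt hd2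
      _ = Real.sqrt 2 * n := by
          rw [Real.sqrt_mul (by norm_num), Real.sqrt_sq hnR.le]
  have hsd' : t * Real.sqrt d / n ≤ Real.sqrt 2 * t := by
    rw [div_le_iff₀ hnR]
    calc t * Real.sqrt d ≤ t * (Real.sqrt 2 * n) := mul_le_mul_of_nonneg_left hsd ht
      _ = Real.sqrt 2 * t * n := by ring
  have hnum : Real.sqrt 2 ≤ 1.5 := by
    nlinarith [Real.sq_sqrt (show (0:ℝ) ≤ 2 by norm_num), Real.sqrt_nonneg 2]
  have hexp : Real.exp ((1:ℝ)/2) ≤ 1.7 := by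
    nlinarith [Real.exp_pos ((1:ℝ)/2), Real.exp_one_lt_d9,
      (show Real.exp ((1:ℝ)/2) * Real.exp ((1:ℝ)/2) = Real.exp 1 from by
        rw [← Real.exp_add]; norm_num)]
  have hsd2 : t * Real.sqrt d / n ≤ 1.5 * t := by
    refine le_trans hsd' ?_
    nlinarith
  -- final chain
  have hchain : (ℙ {ω | Real.sqrt ((Z₁ ω) ^ 2 + (Z₂ ω) ^ 2) ≤ t * Real.sqrt d}).toReal
      ≤ M * t * (M*t)^p := by
    have hfinal : 2 * (t * Real.sqrt d / n) * ((M*t)^p * (Real.exp (1/2) * 10))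
        ≤ M * t * (M*t)^p := by
      have hs0 : 0 ≤ t * Real.sqrt d / n := by positivity
      have e2 : (t * Real.sqrt d / n) * Real.exp (1/2) ≤ (1.5*t) * 1.7 :=
        mul_le_mul hsd2 hexp (Real.exp_nonneg _) (by positivity)
      have e3 : 2 * (t * Real.sqrt d / n) * ((M*t)^p * (Real.exp (1/2) * 10))
          = 20 * ((t * Real.sqrt d / n) * Real.exp (1/2)) * (M*t)^p := by ring
      rw [e3]
      have e4 : 20 * ((t * Real.sqrt d / n) * Real.exp (1/2)) * (M*t)^p
          ≤ 20 * ((1.5*t) * 1.7) * (M*t)^p := by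
        apply mul_le_mul_of_nonneg_right _ hG0
        linarith
      refine le_trans e4 ?_
      have : (20:ℝ) * ((1.5*t)*1.7) = 51 * t := by ring
      rw [this]
      nlinarith [mul_nonneg ht hG0]
    calc (ℙ {ω | Real.sqrt ((Z₁ ω) ^ 2 + (Z₂ ω) ^ 2) ≤ t * Real.sqrt d}).toReal
        ≤ F n + ∑ j ∈ range n,
            (ℙ ({ω | Z₁ ω ≤ h (j+1)} ∩ ({ω | Z₂ ω ≤ a j} \ {ω | Z₂ ω ≤ a (j+1)}))).toReal :=
          hmeas
      _ ≤ 0 + ∑ j ∈ range n, 2 * h (j+1) * (F j - F (j+1)) :=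
          add_le_add hFn (Finset.sum_le_sum hterm)
      _ = ∑ j ∈ range n, 2 * h (j+1) * (F j - F (j+1)) := zero_add _
      _ ≤ 2 * (t * Real.sqrt d / n) * ∑ j ∈ range n, F j := habel
      _ ≤ 2 * (t * Real.sqrt d / n) * ((M*t)^p * (Real.exp (1/2) * 10)) :=
          mul_le_mul_of_nonneg_left hsum2 (by positivity)
      _ ≤ M * t * (M*t)^p := hfinal
  rcases eq_or_lt_of_le ht with hteq | ht0
  · rw [← hteq] at hchain ⊢
    rw [mul_zero, Real.zero_rpow (ne_of_gt hd0)]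
    simpa using hchain
  · have hMt : M * t ≠ 0 := ne_of_gt (mul_pos hM0 ht0)
    have hrw : (M*t)^d = (M*t)^p * (M*t) := by
      rw [hdp1, Real.rpow_add_one hMt]
    rw [hrw]
    calc (ℙ {ω | Real.sqrt ((Z₁ ω) ^ 2 + (Z₂ ω) ^ 2) ≤ t * Real.sqrt d}).toReal
        ≤ M * t * (M*t)^p := hchain
      _ = (M*t)^p * (M*t) := by ring
end

section
/- Let C > 0 and let V₁,…,V_l be independent non-negative random variables satisfying P(V_j < t) ≤ Ct for every t > 0 and every j. Then there is a constant c (depending only on C) such that P( Σ_{j=1}^l V_j² < t² l ) ≤ (ct)^l for every t > 0. -/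
open MeasureTheory ProbabilityTheory

lemma geom_partial_sum_le (K : ℕ) :
    ∑ k ∈ Finset.range K, ((k : ℝ) + 1) * Real.exp (-((k : ℝ) ^ 2)) ≤ 4 := by
  have he : (2.7182818283 : ℝ) < Real.exp 1 := Real.exp_one_gt_d9
  have hepos : (0 : ℝ) < Real.exp 1 := Real.exp_pos 1
  set r : ℝ := 2 / Real.exp 1 with hr
  have hr0 : 0 ≤ r := by positivity
  have hr1 : r < 1 := by
    rw [hr, div_lt_one hepos]; linarith
  have hterm : ∀ k : ℕ, ((k : ℝ) + 1) * Real.exp (-((k : ℝ) ^ 2)) ≤ r ^ k := by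
    intro k
    have h1 : ((k : ℝ) + 1) ≤ 2 ^ k := by
      have := Nat.lt_two_pow_self (n := k)
      exact_mod_cast Nat.succ_le_of_lt this
    have h2 : Real.exp (-((k : ℝ) ^ 2)) ≤ Real.exp (-(k : ℝ)) := by
      apply Real.exp_le_exp.mpr
      have : (k : ℝ) ≤ (k : ℝ) ^ 2 := by
        have := Nat.le_self_pow (two_ne_zero) k
        exact_mod_cast this
      linarith
    have h3 : r ^ k = 2 ^ k * Real.exp (-(k : ℝ)) := by
      have hek : Real.exp 1 ^ k = Real.exp (k : ℝ) := by
        rw [← Real.exp_nat_mul, mul_one]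
      rw [hr, div_pow, Real.exp_neg, hek]
      field_simp
    rw [h3]
    have hexp_nonneg : 0 ≤ Real.exp (-((k : ℝ) ^ 2)) := (Real.exp_pos _).le
    calc ((k : ℝ) + 1) * Real.exp (-((k : ℝ) ^ 2))
        ≤ 2 ^ k * Real.exp (-((k : ℝ) ^ 2)) := by
          apply mul_le_mul_of_nonneg_right h1 hexp_nonneg
      _ ≤ 2 ^ k * Real.exp (-(k : ℝ)) := by
          apply mul_le_mul_of_nonneg_left h2 (by positivity)
  calc ∑ k ∈ Finset.range K, ((k : ℝ) + 1) * Real.exp (-((k : ℝ) ^ 2))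
      ≤ ∑ k ∈ Finset.range K, r ^ k := Finset.sum_le_sum fun k _ => hterm k
    _ ≤ ∑' k : ℕ, r ^ k := by
        apply Summable.sum_le_tsum _ (fun k _ => pow_nonneg hr0 k)
        exact summable_geometric_of_lt_one hr0 hr1
    _ = (1 - r)⁻¹ := tsum_geometric_of_lt_one hr0 hr1
    _ ≤ 4 := by
        have h14 : (1 : ℝ) / 4 ≤ 1 - r := by
          have h : 2 / Real.exp 1 ≤ 3 / 4 := by
            rw [div_le_div_iff₀ hepos (by norm_num : (0:ℝ) < 4)]
            linarith
          rw [hr]; linarith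
        calc (1 - r)⁻¹ ≤ ((1 : ℝ) / 4)⁻¹ := by
              apply inv_anti₀ (by norm_num) h14
          _ = 4 := by norm_num

lemma key_exp_bound {Ω : Type} [MeasureSpace Ω] [IsProbabilityMeasure (ℙ : Measure Ω)]
    {C t : ℝ} (hC : 0 < C) (ht : 0 < t) {V : Ω → ℝ} (hm : Measurable V)
    (h0 : ∀ ω, 0 ≤ V ω)
    (hsb : ∀ u : ℝ, 0 < u → (ℙ {ω | V ω < u}).toReal ≤ C * u) :
    ∫ ω, Real.exp (-(1 / t ^ 2) * V ω ^ 2) ≤ 5 * C * t := by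
  -- choose K with exp(-K^2) ≤ C t
  set K : ℕ := ⌈Real.log (1 / (C * t))⌉₊ with hKdef
  have hK : Real.exp (-((K : ℝ) ^ 2)) ≤ C * t := by
    have h1 : Real.log (1 / (C * t)) ≤ (K : ℝ) := Nat.le_ceil _
    have h2 : (K : ℝ) ≤ (K : ℝ) ^ 2 := by
      exact_mod_cast Nat.le_self_pow two_ne_zero K
    have h3 : Real.exp (-((K : ℝ) ^ 2)) ≤ Real.exp (-(K : ℝ)) :=
      Real.exp_le_exp.mpr (by linarith)
    have h4 : Real.exp (-(K : ℝ)) ≤ C * t := by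
      have hCt : 0 < C * t := by positivity
      rw [Real.log_div one_ne_zero (ne_of_gt hCt), Real.log_one] at h1
      have : -(K : ℝ) ≤ Real.log (C * t) := by linarith
      calc Real.exp (-(K : ℝ)) ≤ Real.exp (Real.log (C * t)) := Real.exp_le_exp.mpr this
        _ = C * t := Real.exp_log hCt
    linarith
  -- the comparison functions
  set g : ℕ → Ω → ℝ := fun k ω => if V ω < ((k : ℝ) + 1) * t then Real.exp (-((k : ℝ) ^ 2)) else 0
    with hg
  have hg_nonneg : ∀ k ω, 0 ≤ g k ω := by
    intro k ω; rw [hg]; dsimp only; split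
    · exact (Real.exp_pos _).le
    · exact le_rfl
  -- pointwise bound
  have h_pt : ∀ ω, Real.exp (-(1 / t ^ 2) * V ω ^ 2)
      ≤ (∑ k ∈ Finset.range K, g k ω) + Real.exp (-((K : ℝ) ^ 2)) := by
    intro ω
    set x := V ω with hx
    have hx0 : 0 ≤ x := h0 ω
    have hsum_nonneg : 0 ≤ ∑ k ∈ Finset.range K, g k ω :=
      Finset.sum_nonneg fun k _ => hg_nonneg k ω
    have harg : -(1 / t ^ 2) * x ^ 2 = -((x / t) ^ 2) := by
      field_simp
    by_cases hcase : x < (K : ℝ) * t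
    · set k : ℕ := ⌊x / t⌋₊ with hkdef
      have hxt0 : 0 ≤ x / t := div_nonneg hx0 ht.le
      have hk1 : k < K := by
        rw [hkdef]
        exact Nat.floor_lt hxt0 |>.mpr ((div_lt_iff₀ ht).mpr hcase)
      have hk2 : x < ((k : ℝ) + 1) * t := by
        have := Nat.lt_floor_add_one (x / t)
        calc x = (x / t) * t := by field_simp
          _ < ((k : ℝ) + 1) * t := by
              apply mul_lt_mul_of_pos_right _ ht
              exact_mod_cast this
      have hk3 : (k : ℝ) ≤ x / t := Nat.floor_le hxt0
      have hgk : g k ω = Real.exp (-((k : ℝ) ^ 2)) := by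
        rw [hg]; dsimp only; rw [if_pos]; exact hk2
      have hle : Real.exp (-(1 / t ^ 2) * x ^ 2) ≤ g k ω := by
        rw [hgk, harg]
        apply Real.exp_le_exp.mpr
        have : (k : ℝ) ^ 2 ≤ (x / t) ^ 2 := by
          apply pow_le_pow_left₀ (Nat.cast_nonneg k) hk3
        linarith
      have hmem : g k ω ≤ ∑ k ∈ Finset.range K, g k ω :=
        Finset.single_le_sum (fun k _ => hg_nonneg k ω) (Finset.mem_range.mpr hk1)
      have : 0 ≤ Real.exp (-((K : ℝ) ^ 2)) := (Real.exp_pos _).le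
      linarith
    · push_neg at hcase
      have hKx : (K : ℝ) ≤ x / t := (le_div_iff₀ ht).mpr hcase
      have hle : Real.exp (-(1 / t ^ 2) * x ^ 2) ≤ Real.exp (-((K : ℝ) ^ 2)) := by
        rw [harg]
        apply Real.exp_le_exp.mpr
        have : (K : ℝ) ^ 2 ≤ (x / t) ^ 2 := by
          apply pow_le_pow_left₀ (Nat.cast_nonneg K) hKx
        linarith
      linarith
  -- integrability
  have hmeas_lhs : Measurable fun ω => Real.exp (-(1 / t ^ 2) * V ω ^ 2) :=
    Real.measurable_exp.comp ((hm.pow_const 2).const_mul _)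
  have h_int_lhs : Integrable (fun ω => Real.exp (-(1 / t ^ 2) * V ω ^ 2)) ℙ := by
    apply (integrable_const (1 : ℝ)).mono' hmeas_lhs.aestronglyMeasurable
    filter_upwards with ω
    rw [Real.norm_eq_abs, abs_of_pos (Real.exp_pos _)]
    apply Real.exp_le_one_iff.mpr
    have h1 : 0 ≤ V ω ^ 2 := sq_nonneg _
    have h2 : 0 ≤ 1 / t ^ 2 := by positivity
    nlinarith
  have hmeas_g : ∀ k, Measurable (g k) := by
    intro k
    apply Measurable.ite (measurableSet_lt hm measurable_const) measurable_const measurable_const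
  have h_int_g : ∀ k, Integrable (g k) ℙ := by
    intro k
    apply (integrable_const (Real.exp (-((k : ℝ) ^ 2)))).mono' (hmeas_g k).aestronglyMeasurable
    filter_upwards with ω
    rw [hg]; dsimp only
    split
    · rw [Real.norm_eq_abs, abs_of_pos (Real.exp_pos _)]
    · simp [Real.exp_nonneg]
  have h_int_rhs : Integrable
      (fun ω => (∑ k ∈ Finset.range K, g k ω) + Real.exp (-((K : ℝ) ^ 2))) ℙ := by
    exact (integrable_finset_sum _ fun k _ => h_int_g k).add (integrable_const _)
  -- integral of g k
  have hint_g_eq : ∀ k : ℕ, ∫ ω, g k ω ∂ℙ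
      = (ℙ {ω | V ω < ((k : ℝ) + 1) * t}).toReal * Real.exp (-((k : ℝ) ^ 2)) := by
    intro k
    have hset : MeasurableSet {ω | V ω < ((k : ℝ) + 1) * t} :=
      measurableSet_lt hm measurable_const
    have : (fun ω => g k ω)
        = Set.indicator {ω | V ω < ((k : ℝ) + 1) * t} (fun _ => Real.exp (-((k : ℝ) ^ 2))) := by
      ext ω
      rw [hg, Set.indicator_apply]
      simp [Set.mem_setOf_eq]
    rw [this, integral_indicator_const _ hset]
    simp [smul_eq_mul]
    rfl
  -- put it together
  have step1 : ∫ ω, Real.exp (-(1 / t ^ 2) * V ω ^ 2)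
      ≤ ∫ ω, ((∑ k ∈ Finset.range K, g k ω) + Real.exp (-((K : ℝ) ^ 2))) ∂ℙ :=
    integral_mono h_int_lhs h_int_rhs h_pt
  have step2 : ∫ ω, ((∑ k ∈ Finset.range K, g k ω) + Real.exp (-((K : ℝ) ^ 2))) ∂ℙ
      = (∑ k ∈ Finset.range K, ∫ ω, g k ω ∂ℙ) + Real.exp (-((K : ℝ) ^ 2)) := by
    rw [integral_add (integrable_finset_sum _ fun k _ => h_int_g k) (integrable_const _),
      integral_finset_sum _ fun k _ => h_int_g k, integral_const]
    simp
  have step3 : (∑ k ∈ Finset.range K, ∫ ω, g k ω ∂ℙ)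
      ≤ ∑ k ∈ Finset.range K, C * t * (((k : ℝ) + 1) * Real.exp (-((k : ℝ) ^ 2))) := by
    apply Finset.sum_le_sum
    intro k _
    rw [hint_g_eq k]
    have hpos : (0 : ℝ) < ((k : ℝ) + 1) * t := by positivity
    have := hsb (((k : ℝ) + 1) * t) hpos
    have hexp : 0 ≤ Real.exp (-((k : ℝ) ^ 2)) := (Real.exp_pos _).le
    calc (ℙ {ω | V ω < ((k : ℝ) + 1) * t}).toReal * Real.exp (-((k : ℝ) ^ 2))
        ≤ (C * (((k : ℝ) + 1) * t)) * Real.exp (-((k : ℝ) ^ 2)) := by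
          apply mul_le_mul_of_nonneg_right this hexp
      _ = C * t * (((k : ℝ) + 1) * Real.exp (-((k : ℝ) ^ 2))) := by ring
  have step4 : ∑ k ∈ Finset.range K, C * t * (((k : ℝ) + 1) * Real.exp (-((k : ℝ) ^ 2)))
      ≤ C * t * 4 := by
    rw [← Finset.mul_sum]
    apply mul_le_mul_of_nonneg_left (geom_partial_sum_le K) (by positivity)
  calc ∫ ω, Real.exp (-(1 / t ^ 2) * V ω ^ 2)
      ≤ (∑ k ∈ Finset.range K, ∫ ω, g k ω ∂ℙ) + Real.exp (-((K : ℝ) ^ 2)) := by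
        rw [← step2]; exact step1
    _ ≤ C * t * 4 + C * t := by
        have := step3.trans step4
        linarith
    _ = 5 * C * t := by ring

/-- Tensorization of small ball probabilities (Lemma "tensorisation"): if the independent
non-negative random variables `V_j` satisfy `P(V_j < t) ≤ C t`, then
`P(∑ V_j² < t² l) ≤ (c t)^l`. -/
theorem tensorization_small_ball (C : ℝ) (hC : 0 < C) :
    ∃ c : ℝ, 0 < c ∧
      ∀ (l : ℕ) (Ω : Type) (_ : MeasureSpace Ω)
        (_ : IsProbabilityMeasure (ℙ : Measure Ω))
        (V : Fin l → Ω → ℝ),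
        (∀ j, Measurable (V j)) →
        iIndepFun (m := fun _ : Fin l => (inferInstance : MeasurableSpace ℝ)) V ℙ →
        (∀ j ω, 0 ≤ V j ω) →
        (∀ j, ∀ t : ℝ, 0 < t → (ℙ {ω | V j ω < t}).toReal ≤ C * t) →
        ∀ t : ℝ, 0 < t →
          (ℙ {ω | ∑ j, (V j ω) ^ 2 < t ^ 2 * l}).toReal ≤ (c * t) ^ l := by
  refine ⟨5 * Real.exp 1 * C, by positivity, ?_⟩
  intro l Ω _ _ V hVmeas hVindep hVnonneg hVsmall t ht
  set s : ℝ := -(1 / t ^ 2) with hs_def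
  have hs : s ≤ 0 := by
    have : (0:ℝ) ≤ 1 / t ^ 2 := by positivity
    rw [hs_def]; linarith
  set X : Fin l → Ω → ℝ := fun j ω => V j ω ^ 2 with hX
  have hXmeas : ∀ j, Measurable (X j) := fun j => (hVmeas j).pow_const 2
  have hXindep : iIndepFun (m := fun _ : Fin l => (inferInstance : MeasurableSpace ℝ)) X ℙ :=
    hVindep.comp (fun _ x => x ^ 2) (fun _ => measurable_id.pow_const 2)
  -- integrability of exp(s * sum)
  have hsum_meas : Measurable fun ω => (∑ j, X j) ω := by
    simp only [Finset.sum_apply]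
    exact Finset.measurable_sum _ fun j _ => hXmeas j
  have h_int : Integrable (fun ω => Real.exp (s * (∑ j, X j) ω)) ℙ := by
    apply (integrable_const (1 : ℝ)).mono'
      (Real.measurable_exp.comp (hsum_meas.const_mul s)).aestronglyMeasurable
    filter_upwards with ω
    simp only [Function.comp_apply]
    rw [Real.norm_eq_abs, abs_of_pos (Real.exp_pos _)]
    apply Real.exp_le_one_iff.mpr
    have hnn : 0 ≤ (∑ j, X j) ω := by
      simp only [Finset.sum_apply]
      exact Finset.sum_nonneg fun j _ => sq_nonneg _
    nlinarith
  -- Chernoff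
  have chernoff := measure_le_le_exp_mul_mgf (μ := (ℙ : Measure Ω)) (X := ∑ j, X j)
    (t ^ 2 * l) hs h_int
  -- the strict event is included in the ≤ event
  have hsubset : {ω | ∑ j, (V j ω) ^ 2 < t ^ 2 * l} ⊆ {ω | (∑ j, X j) ω ≤ t ^ 2 * l} := by
    intro ω hω
    simp only [Set.mem_setOf_eq, Finset.sum_apply] at *
    exact le_of_lt hω
  have hmono : (ℙ {ω | ∑ j, (V j ω) ^ 2 < t ^ 2 * l}).toReal
      ≤ (ℙ {ω | (∑ j, X j) ω ≤ t ^ 2 * l}).toReal := by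
    apply ENNReal.toReal_mono (measure_ne_top _ _)
    exact measure_mono hsubset
  -- mgf factorization
  have hmgf : mgf (∑ j, X j) ℙ s = ∏ j, mgf (X j) ℙ s :=
    hXindep.mgf_sum hXmeas Finset.univ
  -- bound each factor
  have hfactor : ∀ j, mgf (X j) ℙ s ≤ 5 * C * t := by
    intro j
    have h := key_exp_bound hC ht (hVmeas j) (hVnonneg j) (hVsmall j)
    rw [mgf]
    exact h
  have hprod : ∏ j, mgf (X j) ℙ s ≤ (5 * C * t) ^ l := by
    calc ∏ j, mgf (X j) ℙ s ≤ ∏ _j : Fin l, (5 * C * t) :=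
          Finset.prod_le_prod (fun j _ => mgf_nonneg) (fun j _ => hfactor j)
      _ = (5 * C * t) ^ l := by
          rw [Finset.prod_const, Finset.card_univ, Fintype.card_fin]
  -- compute exp(-s * ε) = exp l
  have hexp_eq : Real.exp (-s * (t ^ 2 * l)) = Real.exp 1 ^ l := by
    rw [hs_def, neg_neg]
    have ht2 : t ^ 2 ≠ 0 := by positivity
    have h1 : 1 / t ^ 2 * (t ^ 2 * l) = (l : ℝ) := by field_simp
    rw [h1, ← Real.exp_nat_mul, mul_one]
  calc (ℙ {ω | ∑ j, (V j ω) ^ 2 < t ^ 2 * l}).toReal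
      ≤ (ℙ {ω | (∑ j, X j) ω ≤ t ^ 2 * l}).toReal := hmono
    _ ≤ Real.exp (-s * (t ^ 2 * l)) * mgf (∑ j, X j) ℙ s := chernoff
    _ = Real.exp 1 ^ l * ∏ j, mgf (X j) ℙ s := by rw [hexp_eq, hmgf]
    _ ≤ Real.exp 1 ^ l * (5 * C * t) ^ l := by
        apply mul_le_mul_of_nonneg_left hprod (by positivity)
    _ = (5 * Real.exp 1 * C * t) ^ l := by
        rw [← mul_pow]; ring_nf
end

section
/- Let Z = X + iY ∈ ℂ^N be a random vector whose imaginary part Y ∈ ℝ^N is deterministic, and let X₁, X₂ be independent copies of X. Set Ẑ = (X₁, X₂) ∈ ℝ^{2N}. Let E be a complex linear subspace of ℂ^N and let Real(E) = { (Re z, Im z) : z ∈ E } ⊆ ℝ^{2N}. Then for every r ≥ 0, L(P_E Z, r) ≤ ( L(P_{Real(E)} Ẑ, 2r) )^{1/2}, where P_E and P_{Real(E)} denote the orthogonal projections onto E and Real(E) respectively. -/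
open MeasureTheory ProbabilityTheory

/-- The `ℝ`-linear map `Real : ℂ^N → ℝ^{2N}`, `z = x + iy ↦ (x, y)`. -/
noncomputable def realifyL (N : ℕ) :
    EuclideanSpace ℂ (Fin N) →ₗ[ℝ] EuclideanSpace ℝ (Fin N ⊕ Fin N) where
  toFun z := (WithLp.equiv 2 (Fin N ⊕ Fin N → ℝ)).symm
    (Sum.elim (fun j => (z j).re) (fun j => (z j).im))
  map_add' z w := by
    ext i
    cases i <;> rfl
  map_smul' c z := by
    ext i
    cases i with
    | inl j =>
        show ((c • z) j).re = c * (z j).re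
        simp [Complex.smul_re]
    | inr j =>
        show ((c • z) j).im = c * (z j).im
        simp [Complex.smul_im]

/-- The real version `Real(E) ⊆ ℝ^{2N}` of a complex subspace `E ⊆ ℂ^N`. -/
noncomputable def realifySub {N : ℕ} (E : Submodule ℂ (EuclideanSpace ℂ (Fin N))) :
    Submodule ℝ (EuclideanSpace ℝ (Fin N ⊕ Fin N)) :=
  Submodule.map (realifyL N) (E.restrictScalars ℝ)

/-- The Lévy concentration function of a random vector. -/
noncomputable def levyConc {Ω : Type} [MeasureSpace Ω] {F : Type*}
    [NormedAddCommGroup F] (W : Ω → F) (r : ℝ) : ENNReal :=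
  ⨆ w : F, ℙ {ω | ‖W ω - w‖ ≤ r}

section Aux

/-- complexification of a real vector -/
noncomputable def cxL (N : ℕ) : EuclideanSpace ℝ (Fin N) →ₗ[ℝ] EuclideanSpace ℂ (Fin N) where
  toFun x := (WithLp.equiv 2 (Fin N → ℂ)).symm fun j => (x j : ℂ)
  map_add' x y := by
    ext j
    show ((x j + y j : ℝ) : ℂ) = (x j : ℂ) + (y j : ℂ)
    push_cast
    rfl
  map_smul' c x := by
    ext j
    show ((c * x j : ℝ) : ℂ) = c • ((x j : ℝ) : ℂ)
    rw [Complex.real_smul]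
    push_cast
    rfl

lemma realifyL_norm (N : ℕ) (z : EuclideanSpace ℂ (Fin N)) : ‖realifyL N z‖ = ‖z‖ := by
  rw [EuclideanSpace.norm_eq, EuclideanSpace.norm_eq]
  congr 1
  rw [Fintype.sum_sum_type]
  have : ∀ j : Fin N, ‖z j‖ ^ 2 = ‖(z j).re‖ ^ 2 + ‖(z j).im‖ ^ 2 := by
    intro j
    rw [Complex.sq_norm, Complex.normSq_apply]
    simp only [Real.norm_eq_abs, sq_abs]
    ring
  simp only [this]
  rw [Finset.sum_add_distrib]
  rfl

lemma realifyL_inner (N : ℕ) (z w : EuclideanSpace ℂ (Fin N)) :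
    (inner ℝ (realifyL N z) (realifyL N w) : ℝ) = (inner ℂ z w : ℂ).re := by
  rw [PiLp.inner_apply, PiLp.inner_apply, Fintype.sum_sum_type, Complex.re_sum,
    ← Finset.sum_add_distrib]
  refine Finset.sum_congr rfl fun j _ => ?_
  simp only [RCLike.inner_apply, conj_trivial, Complex.mul_re, Complex.conj_re,
    Complex.conj_im, realifyL, LinearMap.coe_mk, AddHom.coe_mk, WithLp.equiv_symm_apply, WithLp.ofLp_toLp,
    Sum.elim_inl, Sum.elim_inr]
  ring

/-- key intertwining lemma -/
lemma realifyL_proj {N : ℕ} (E : Submodule ℂ (EuclideanSpace ℂ (Fin N)))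
    (v : EuclideanSpace ℂ (Fin N)) :
    (Submodule.orthogonalProjectionOnto (realifySub E) (realifyL N v) :
      EuclideanSpace ℝ (Fin N ⊕ Fin N)) =
    realifyL N (Submodule.orthogonalProjectionOnto E v : EuclideanSpace ℂ (Fin N)) := by
  rw [← Submodule.starProjection_apply (realifySub E)]
  apply Submodule.eq_starProjection_of_mem_of_inner_eq_zero
  · exact ⟨(Submodule.orthogonalProjectionOnto E v : EuclideanSpace ℂ (Fin N)),
      (Submodule.orthogonalProjectionOnto E v).2, rfl⟩
  · rintro u ⟨e, he, rfl⟩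
    rw [← map_sub, realifyL_inner]
    have h0 : (inner ℂ (v - (Submodule.orthogonalProjectionOnto E v : EuclideanSpace ℂ (Fin N))) e : ℂ) = 0 :=
      Submodule.starProjection_inner_eq_zero (K := E) v e he
    rw [h0, Complex.zero_re]

end Aux

/-- Randomizing all coordinates (Lemma "Randomizing all coordinates"): the Lévy
concentration function of the projection of `Z = X + iY` (with fixed `Y`) onto a complex
subspace `E` is controlled by that of the projection of `Ẑ = (X₁, X₂)` onto `Real(E)`. -/
theorem randomizing_all_coordinates
    (N : ℕ) (Ω : Type) [MeasureSpace Ω] [IsProbabilityMeasure (ℙ : Measure Ω)]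
    (Z : Ω → EuclideanSpace ℂ (Fin N)) (hZ : ∀ i, Measurable fun ω => Z ω i)
    -- the imaginary part of `Z` is deterministic
    (Y : Fin N → ℝ) (hY : ∀ ω i, (Z ω i).im = Y i)
    -- `X₁, X₂` are independent copies of the real part `X` of `Z`
    (X₁ X₂ : Ω → EuclideanSpace ℝ (Fin N)) (hX₁ : Measurable X₁) (hX₂ : Measurable X₂)
    (hlaw₁ : Measure.map X₁ ℙ =
      Measure.map (fun ω => (WithLp.equiv 2 (Fin N → ℝ)).symm fun i => (Z ω i).re) ℙ)
    (hlaw₂ : Measure.map X₂ ℙ =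
      Measure.map (fun ω => (WithLp.equiv 2 (Fin N → ℝ)).symm fun i => (Z ω i).re) ℙ)
    (hindep : IndepFun X₁ X₂ ℙ)
    (E : Submodule ℂ (EuclideanSpace ℂ (Fin N)))
    (r : ℝ) (hr : 0 ≤ r) :
    levyConc (fun ω => (Submodule.orthogonalProjectionOnto E (Z ω) : EuclideanSpace ℂ (Fin N))) r ≤
      (levyConc (fun ω =>
        (Submodule.orthogonalProjectionOnto (realifySub E)
          ((WithLp.equiv 2 (Fin N ⊕ Fin N → ℝ)).symm (Sum.elim (X₁ ω) (X₂ ω)) :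
            EuclideanSpace ℝ (Fin N ⊕ Fin N)) :
          EuclideanSpace ℝ (Fin N ⊕ Fin N))) (2 * r)) ^ (1 / 2 : ℝ) := by
  classical
  set iYc : EuclideanSpace ℂ (Fin N) := Complex.I • cxL N ((WithLp.equiv 2 (Fin N → ℝ)).symm Y)
    with hiYc
  -- the projection as a continuous linear map into the ambient space
  set Q : EuclideanSpace ℂ (Fin N) →L[ℂ] EuclideanSpace ℂ (Fin N) :=
    E.subtypeL.comp (Submodule.orthogonalProjectionOnto E) with hQ
  have hQapp : ∀ v, Q v = (Submodule.orthogonalProjectionOnto E v : EuclideanSpace ℂ (Fin N)) := fun _ => rfl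
  -- real part of Z
  set X : Ω → EuclideanSpace ℝ (Fin N) :=
    fun ω => (WithLp.equiv 2 (Fin N → ℝ)).symm fun i => (Z ω i).re with hX
  have hXmeas : Measurable X := by
    refine (WithLp.measurable_toLp 2 (Fin N → ℝ)).comp (measurable_pi_lambda (fun ω i => (Z ω i).re) ?_)
    intro i
    exact (Complex.measurable_re.comp (hZ i))
  have hZeq : ∀ ω, Z ω = cxL N (X ω) + iYc := by
    intro ω
    ext j
    show Z ω j = ((Z ω j).re : ℂ) + Complex.I * (Y j : ℂ)
    apply Complex.ext
    · simp
    · simp [hY ω j]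
  rw [levyConc]
  apply iSup_le
  intro w
  -- the test function on real vectors
  set g : EuclideanSpace ℝ (Fin N) → ℝ := fun x => ‖Q (cxL N x + iYc) - w‖ with hg
  have hgcont : Continuous g := by
    apply Continuous.norm
    apply Continuous.sub _ continuous_const
    exact Q.continuous.comp (((cxL N).continuous_of_finiteDimensional).add continuous_const)
  set T : Set (EuclideanSpace ℝ (Fin N)) := {x | g x ≤ r} with hT
  have hTmeas : MeasurableSet T := measurableSet_le hgcont.measurable measurable_const
  -- the event equals a preimage under X
  have hAeq : {ω | ‖(Submodule.orthogonalProjectionOnto E (Z ω) : EuclideanSpace ℂ (Fin N)) - w‖ ≤ r}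
      = X ⁻¹' T := by
    ext ω
    simp only [Set.mem_setOf_eq, Set.mem_preimage, hT, hg, hQapp]
    rw [hZeq ω]
  -- laws agree
  have hlawA : ∀ (W : Ω → EuclideanSpace ℝ (Fin N)), Measurable W →
      Measure.map W ℙ = Measure.map X ℙ → ℙ (W ⁻¹' T) = ℙ (X ⁻¹' T) := by
    intro W hW hlaw
    rw [← Measure.map_apply hW hTmeas, ← Measure.map_apply hXmeas hTmeas, hlaw]
  have h1 : ℙ (X₁ ⁻¹' T) = ℙ (X ⁻¹' T) := hlawA X₁ hX₁ hlaw₁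
  have h2 : ℙ (X₂ ⁻¹' T) = ℙ (X ⁻¹' T) := hlawA X₂ hX₂ hlaw₂
  have hmul : ℙ (X₁ ⁻¹' T ∩ X₂ ⁻¹' T) = ℙ (X₁ ⁻¹' T) * ℙ (X₂ ⁻¹' T) :=
    hindep.measure_inter_preimage_eq_mul T T hTmeas hTmeas
  -- the target point in ℝ^{2N}
  set w₁ : EuclideanSpace ℂ (Fin N) := (w - Q iYc) + Complex.I • (w - Q iYc) with hw₁
  set w₂ : EuclideanSpace ℝ (Fin N ⊕ Fin N) := realifyL N w₁ with hw₂
  -- event inclusion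
  have hincl : X₁ ⁻¹' T ∩ X₂ ⁻¹' T ⊆
      {ω | ‖(Submodule.orthogonalProjectionOnto (realifySub E)
          ((WithLp.equiv 2 (Fin N ⊕ Fin N → ℝ)).symm (Sum.elim (X₁ ω) (X₂ ω)) :
            EuclideanSpace ℝ (Fin N ⊕ Fin N)) :
          EuclideanSpace ℝ (Fin N ⊕ Fin N)) - w₂‖ ≤ 2 * r} := by
    rintro ω ⟨hω₁, hω₂⟩
    simp only [Set.mem_setOf_eq]
    set C : EuclideanSpace ℂ (Fin N) := cxL N (X₁ ω) + Complex.I • cxL N (X₂ ω) with hC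
    have hhat : (WithLp.equiv 2 (Fin N ⊕ Fin N → ℝ)).symm (Sum.elim (X₁ ω) (X₂ ω))
        = realifyL N C := by
      ext i
      cases i with
      | inl j =>
          show X₁ ω j = (C j).re
          simp [hC, cxL]
      | inr j =>
          show X₂ ω j = (C j).im
          simp [hC, cxL]
    rw [hhat, realifyL_proj, ← hQapp, hw₂, ← map_sub, realifyL_norm]
    have hkey : Q C - w₁ = (Q (cxL N (X₁ ω) + iYc) - w)
        + Complex.I • (Q (cxL N (X₂ ω) + iYc) - w) := by
      simp only [hC, hw₁, map_add, _root_.map_smul, smul_sub, smul_add]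
      abel
    rw [hkey]
    calc ‖(Q (cxL N (X₁ ω) + iYc) - w) + Complex.I • (Q (cxL N (X₂ ω) + iYc) - w)‖
        ≤ ‖Q (cxL N (X₁ ω) + iYc) - w‖ + ‖Complex.I • (Q (cxL N (X₂ ω) + iYc) - w)‖ :=
          norm_add_le _ _
      _ = ‖Q (cxL N (X₁ ω) + iYc) - w‖ + ‖Q (cxL N (X₂ ω) + iYc) - w‖ := by
          rw [norm_smul, Complex.norm_I, one_mul]
      _ ≤ r + r := add_le_add hω₁ hω₂
      _ = 2 * r := by ring
  -- put it all together
  have hsq : ℙ (X ⁻¹' T) * ℙ (X ⁻¹' T) ≤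
      levyConc (fun ω =>
        (Submodule.orthogonalProjectionOnto (realifySub E)
          ((WithLp.equiv 2 (Fin N ⊕ Fin N → ℝ)).symm (Sum.elim (X₁ ω) (X₂ ω)) :
            EuclideanSpace ℝ (Fin N ⊕ Fin N)) :
          EuclideanSpace ℝ (Fin N ⊕ Fin N))) (2 * r) := by
    have heq : ℙ (X₁ ⁻¹' T) * ℙ (X₂ ⁻¹' T) = ℙ (X ⁻¹' T) * ℙ (X ⁻¹' T) := by
      rw [h1, h2]
    rw [← heq, ← hmul]
    refine le_trans (measure_mono hincl) ?_
    exact le_iSup (fun w' => ℙ {ω | ‖(Submodule.orthogonalProjectionOnto (realifySub E)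
          ((WithLp.equiv 2 (Fin N ⊕ Fin N → ℝ)).symm (Sum.elim (X₁ ω) (X₂ ω)) :
            EuclideanSpace ℝ (Fin N ⊕ Fin N)) :
          EuclideanSpace ℝ (Fin N ⊕ Fin N)) - w'‖ ≤ 2 * r}) w₂
  rw [hAeq]
  have hrpow : ℙ (X ⁻¹' T) = (ℙ (X ⁻¹' T) * ℙ (X ⁻¹' T)) ^ (1 / 2 : ℝ) := by
    rw [← sq, ← ENNReal.rpow_natCast _ 2, ← ENNReal.rpow_mul]
    norm_num
  rw [hrpow]
  exact ENNReal.rpow_le_rpow hsq (by norm_num)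
end
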